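/- arXiv:2307.06092 — 3 statements merged into one kernel-verified Lean document; each statement's English description precedes it below -/
import Mathlib

section
/- Let F be a real random variable and A ≥ 0 an integrable random variable such that, conditionally on A, F is centered Gaussian with variance A. Then for every continuously differentiable Lipschitz function f : ℝ → ℝ and every bounded measurable φ : [0,∞) → ℝ, one has E[F·f(F)·φ(A)] = E[A·f'(F)·φ(A)]. -/
open MeasureTheory ProbabilityTheory Real
open scoped NNReal ENNReal
namespace GaussIBPAux

lemma coe_pos_of_ne_zero {v : ℝ≥0} (hv : v ≠ 0) : (0:ℝ) < v := by
  exact NNReal.coe_pos.mpr (pos_iff_ne_zero.mpr hv)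

lemma cont_of_hasDerivAt {f f' : ℝ → ℝ} (hf : ∀ x, HasDerivAt f (f' x) x) : Continuous f :=
  continuous_iff_continuousAt.2 fun x => (hf x).continuousAt

lemma abs_deriv_le {f f' : ℝ → ℝ} (hf : ∀ x, HasDerivAt f (f' x) x) {L : NNReal}
    (hLip : LipschitzWith L f) (x : ℝ) : |f' x| ≤ L := by
  have h := (hf x).hasFDerivAt.le_of_lipschitz hLip
  simpa using h

lemma abs_le_of_lipschitz {f : ℝ → ℝ} {L : NNReal} (hLip : LipschitzWith L f) (x : ℝ) :
    |f x| ≤ |f 0| + L * |x| := by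
  have h := hLip.dist_le_mul x 0
  simp only [Real.dist_eq, sub_zero] at h
  calc |f x| ≤ |f x - f 0| + |f 0| := by
        simpa using abs_add_le (f x - f 0) (f 0)
    _ ≤ L * |x| + |f 0| := by linarith
    _ = |f 0| + L * |x| := by ring

lemma hasDerivAt_pdf (v : ℝ≥0) (hv : v ≠ 0) (x : ℝ) :
    HasDerivAt (gaussianPDFReal 0 v) (-(x / v) * gaussianPDFReal 0 v x) x := by
  have hv' : (0:ℝ) < v := coe_pos_of_ne_zero hv
  have h1 : HasDerivAt (fun y : ℝ => -(y - 0)^2 / (2 * (v:ℝ))) (-(x/v)) x := by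
    have h := (((hasDerivAt_id x).sub_const 0).pow 2).neg.div_const (2 * (v:ℝ))
    refine h.congr_deriv ?_
    simp only [id]
    field_simp
    ring
  have h2 := (h1.exp).const_mul ((√(2 * π * (v:ℝ)))⁻¹)
  have hfun : gaussianPDFReal 0 v = fun y => (√(2 * π * (v:ℝ)))⁻¹ * rexp (-(y - 0) ^ 2 / (2 * (v:ℝ))) := by
    funext y; simp only [gaussianPDFReal]
  rw [hfun]
  refine h2.congr_deriv ?_
  ring

end GaussIBPAux

namespace GaussIBPAux2
open GaussIBPAux

lemma integrable_mul_pdf (v : ℝ≥0) (hv : v ≠ 0) {g : ℝ → ℝ}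
    (hg : AEStronglyMeasurable g volume) {a b c : ℝ}
    (hbd : ∀ x, |g x| ≤ a + b * |x| + c * x ^ 2) :
    Integrable (fun x => g x * gaussianPDFReal 0 v x) := by
  have hv' : (0:ℝ) < v := coe_pos_of_ne_zero hv
  have hβ : (0:ℝ) < (2 * (v:ℝ))⁻¹ := by positivity
  set C : ℝ := (√(2 * π * (v:ℝ)))⁻¹ with hCdef
  have hC : 0 ≤ C := by positivity
  have hpdf_eq : ∀ x : ℝ, gaussianPDFReal 0 v x = C * rexp (-(2 * (v:ℝ))⁻¹ * x ^ 2) := by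
    intro x
    simp only [gaussianPDFReal, sub_zero, hCdef]
    congr 1
    rw [neg_div, neg_mul]
    congr 1
    rw [div_eq_inv_mul]
  have hexp : Integrable (fun x : ℝ => rexp (-(2 * (v:ℝ))⁻¹ * x ^ 2)) :=
    integrable_exp_neg_mul_sq hβ
  have habs : Integrable (fun x : ℝ => |x| * rexp (-(2 * (v:ℝ))⁻¹ * x ^ 2)) := by
    have h := (integrable_mul_exp_neg_mul_sq hβ).abs
    refine h.congr (Filter.Eventually.of_forall fun x => ?_)
    simp [abs_mul, abs_of_nonneg (Real.exp_pos _).le]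
  have hsq : Integrable (fun x : ℝ => x ^ 2 * rexp (-(2 * (v:ℝ))⁻¹ * x ^ 2)) := by
    have h := integrable_rpow_mul_exp_neg_mul_sq hβ (s := 2) (by norm_num)
    refine h.congr (Filter.Eventually.of_forall fun x => ?_)
    norm_num [Real.rpow_two]
  have hmaj : Integrable (fun x : ℝ => a * C * rexp (-(2 * (v:ℝ))⁻¹ * x ^ 2)
      + b * C * (|x| * rexp (-(2 * (v:ℝ))⁻¹ * x ^ 2))
      + c * C * (x ^ 2 * rexp (-(2 * (v:ℝ))⁻¹ * x ^ 2))) :=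
    ((hexp.const_mul (a * C)).add (habs.const_mul (b * C))).add (hsq.const_mul (c * C))
  refine hmaj.mono'
    (hg.mul (measurable_gaussianPDFReal 0 v).aestronglyMeasurable)
    (Filter.Eventually.of_forall fun x => ?_)
  have hp0 : 0 ≤ gaussianPDFReal 0 v x := gaussianPDFReal_nonneg 0 v x
  calc ‖g x * gaussianPDFReal 0 v x‖ = |g x| * gaussianPDFReal 0 v x := by
        rw [norm_mul, Real.norm_eq_abs, Real.norm_eq_abs, abs_of_nonneg hp0]
    _ ≤ (a + b * |x| + c * x ^ 2) * gaussianPDFReal 0 v x :=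
        mul_le_mul_of_nonneg_right (hbd x) hp0
    _ = _ := by rw [hpdf_eq x]; ring

lemma integral_gaussianReal_eq (v : ℝ≥0) (hv : v ≠ 0) (g : ℝ → ℝ) :
    ∫ x, g x ∂(gaussianReal 0 v) = ∫ x, g x * gaussianPDFReal 0 v x := by
  rw [gaussianReal_of_var_ne_zero _ hv]
  have hpdf : gaussianPDF 0 v
      = fun x => ((Real.toNNReal (gaussianPDFReal 0 v x) : ℝ≥0) : ℝ≥0∞) := rfl
  rw [hpdf, integral_withDensity_eq_integral_smul (measurable_gaussianPDFReal 0 v).real_toNNReal g]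
  congr 1
  funext x
  rw [NNReal.smul_def, smul_eq_mul, Real.coe_toNNReal _ (gaussianPDFReal_nonneg 0 v x), mul_comm]

lemma integrable_gaussianReal_of_bound (v : ℝ≥0) {g : ℝ → ℝ}
    (hg : AEStronglyMeasurable g volume) (hgm : StronglyMeasurable g) {a b c : ℝ}
    (hbd : ∀ x, |g x| ≤ a + b * |x| + c * x ^ 2) :
    Integrable g (gaussianReal 0 v) := by
  rcases eq_or_ne v 0 with rfl | hv
  · rw [gaussianReal_zero_var]
    refine ⟨hgm.aestronglyMeasurable, ?_⟩
    rw [HasFiniteIntegral, lintegral_dirac]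
    exact ENNReal.coe_lt_top
  · rw [gaussianReal_of_var_ne_zero _ hv]
    rw [integrable_withDensity_iff (measurable_gaussianPDF 0 v)
      (Filter.Eventually.of_forall fun x => ENNReal.ofReal_lt_top)]
    refine (integrable_mul_pdf v hv hg hbd).congr (Filter.Eventually.of_forall fun x => ?_)
    simp [gaussianPDF_def, ENNReal.toReal_ofReal (gaussianPDFReal_nonneg 0 v x)]

end GaussIBPAux2

namespace GaussIBPAux3
open GaussIBPAux GaussIBPAux2

lemma gauss_ibp {f f' : ℝ → ℝ} (hf : ∀ x, HasDerivAt f (f' x) x) (hf'cont : Continuous f')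
    {L : ℝ≥0} (hLip : LipschitzWith L f) (v : ℝ≥0) :
    ∫ x, x * f x ∂(gaussianReal 0 v) = (v : ℝ) * ∫ x, f' x ∂(gaussianReal 0 v) := by
  rcases eq_or_ne v 0 with rfl | hv
  · rw [gaussianReal_zero_var]
    rw [integral_dirac]
    simp
  · have hv' : (0:ℝ) < v := coe_pos_of_ne_zero hv
    have hfc : Continuous f := cont_of_hasDerivAt hf
    set p : ℝ → ℝ := gaussianPDFReal 0 v with hp
    have hvd : ∀ x, HasDerivAt (fun y => -(v:ℝ) * p y) (x * p x) x := by
      intro x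
      have h := (hasDerivAt_pdf v hv x).const_mul (-(v:ℝ))
      refine h.congr_deriv ?_
      rw [← mul_assoc, neg_mul_neg, mul_div_cancel₀ _ hv'.ne']
    -- integrability of the three products
    have huv' : Integrable (f * fun x => x * p x) := by
      have : (f * fun x => x * p x) = fun x => (f x * x) * p x := by funext x; simp; ring
      rw [this]
      refine integrable_mul_pdf v hv ((hfc.mul continuous_id).aestronglyMeasurable)
        (a := 0) (b := |f 0|) (c := (L:ℝ)) fun x => ?_
      have h1 := abs_le_of_lipschitz hLip x
      have h3 : (0:ℝ) ≤ |x| := abs_nonneg x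
      calc |f x * x| = |f x| * |x| := abs_mul _ _
        _ ≤ (|f 0| + (L:ℝ) * |x|) * |x| := mul_le_mul_of_nonneg_right h1 h3
        _ = |f 0| * |x| + (L:ℝ) * (|x| * |x|) := by ring
        _ = 0 + |f 0| * |x| + (L:ℝ) * x ^ 2 := by rw [abs_mul_abs_self, ← pow_two]; ring
    have hu'v : Integrable (f' * fun x => -(v:ℝ) * p x) := by
      have : (f' * fun x => -(v:ℝ) * p x) = fun x => (f' x * -(v:ℝ)) * p x := by
        funext x; simp; ring
      rw [this]
      refine integrable_mul_pdf v hv ((hf'cont.mul continuous_const).aestronglyMeasurable)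
        (a := (v:ℝ) * L) (b := 0) (c := 0) fun x => ?_
      have h1 := abs_deriv_le hf hLip x
      have : |f' x * -(v:ℝ)| = |f' x| * (v:ℝ) := by
        rw [abs_mul, abs_neg, abs_of_nonneg hv'.le]
      nlinarith [abs_nonneg (f' x)]
    have huv : Integrable (f * fun x => -(v:ℝ) * p x) := by
      have : (f * fun x => -(v:ℝ) * p x) = fun x => (f x * -(v:ℝ)) * p x := by
        funext x; simp; ring
      rw [this]
      refine integrable_mul_pdf v hv ((hfc.mul continuous_const).aestronglyMeasurable)
        (a := (v:ℝ) * |f 0|) (b := (v:ℝ) * L) (c := 0) fun x => ?_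
      have h1 := abs_le_of_lipschitz hLip x
      have : |f x * -(v:ℝ)| = |f x| * (v:ℝ) := by
        rw [abs_mul, abs_neg, abs_of_nonneg hv'.le]
      nlinarith [abs_nonneg (f x), abs_nonneg x]
    have hibp := integral_mul_deriv_eq_deriv_mul_of_integrable (fun x _ => hf x) (fun x _ => hvd x) huv' hu'v huv
    rw [integral_gaussianReal_eq v hv, integral_gaussianReal_eq v hv]
    have hL : ∫ x, x * f x * p x = ∫ x, f x * (x * p x) := by
      congr 1; funext x; ring
    rw [hL, hibp]
    have hR : ∫ x, f' x * (-(v:ℝ) * p x) = -(v:ℝ) * ∫ x, f' x * p x := by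
      rw [← integral_const_mul]
      congr 1; funext x; ring
    rw [hR]
    ring

lemma integral_sq (v : ℝ≥0) : ∫ x, x ^ 2 ∂(gaussianReal 0 v) = (v : ℝ) := by
  have h := gauss_ibp (f := id) (f' := fun _ => 1) (fun x => hasDerivAt_id x)
    continuous_const (L := 1) LipschitzWith.id v
  simp only [id, integral_const, measure_univ, probReal_univ, smul_eq_mul,
    mul_one] at h
  rw [← h]
  congr 1; funext x; ring

lemma integrable_sq (v : ℝ≥0) : Integrable (fun x => x ^ 2) (gaussianReal 0 v) := by
  refine integrable_gaussianReal_of_bound v (continuous_pow 2).aestronglyMeasurable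
    (continuous_pow 2).stronglyMeasurable (a := 0) (b := 0) (c := 1) fun x => ?_
  rw [abs_of_nonneg (sq_nonneg x)]; nlinarith

lemma integrable_abs (v : ℝ≥0) : Integrable (fun x : ℝ => |x|) (gaussianReal 0 v) := by
  refine integrable_gaussianReal_of_bound v continuous_abs.aestronglyMeasurable
    continuous_abs.stronglyMeasurable (a := 0) (b := 1) (c := 0) fun x => ?_
  rw [abs_abs]; nlinarith [abs_nonneg x]

lemma integral_abs_le (v : ℝ≥0) : ∫ x, |x| ∂(gaussianReal 0 v) ≤ 1 + (v : ℝ) := by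
  have h2 : Integrable (fun x : ℝ => 1 + x ^ 2) (gaussianReal 0 v) :=
    (integrable_const 1).add (integrable_sq v)
  have h := integral_mono (integrable_abs v) h2 (fun x => by nlinarith [sq_abs x, abs_nonneg x])
  rwa [integral_add (integrable_const 1) (integrable_sq v), integral_const,
    probReal_univ, smul_eq_mul, mul_one, integral_sq] at h

end GaussIBPAux3

namespace GaussIBPAux4
open GaussIBPAux GaussIBPAux2 GaussIBPAux3

lemma measurable_gauss_fam : Measurable fun a : ℝ => gaussianReal 0 (Real.toNNReal a) := by
  refine Measure.measurable_of_measurable_coe _ fun s hs => ?_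
  have heq : (fun a : ℝ => gaussianReal 0 (Real.toNNReal a) s)
      = fun a => if a ≤ 0 then Measure.dirac (0:ℝ) s
          else ∫⁻ x in s, ENNReal.ofReal (gaussianPDFReal 0 (Real.toNNReal a) x) := by
    funext a
    by_cases ha : a ≤ 0
    · simp [ha, Real.toNNReal_of_nonpos ha]
    · rw [if_neg ha, gaussianReal_apply _ (Real.toNNReal_pos.mpr (lt_of_not_ge ha)).ne' s]
      rfl
  rw [heq]
  refine Measurable.ite (measurableSet_Iic (a := (0:ℝ))) measurable_const ?_
  have hjm : Measurable fun q : ℝ × ℝ =>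
      ENNReal.ofReal (gaussianPDFReal 0 (Real.toNNReal q.1) q.2) := by
    apply Measurable.ennreal_ofReal
    simp only [gaussianPDFReal, sub_zero, Real.coe_toNNReal']
    apply Measurable.mul
    · exact (measurable_fst.max measurable_const).const_mul (2 * π)
        |>.sqrt.inv
    · apply Measurable.exp
      exact ((measurable_snd.pow_const 2).neg).div
        ((measurable_fst.max measurable_const).const_mul 2)
  exact hjm.lintegral_prod_right'

end GaussIBPAux4

open GaussIBPAux GaussIBPAux2 GaussIBPAux3 GaussIBPAux4 in
/-- **Gaussian variance mixture integration by parts.**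
If, conditionally on `A ≥ 0`, the random variable `F` is centered Gaussian with variance `A`
(encoded via the disintegration of the joint law of `(A, F)`), then for every continuously
differentiable Lipschitz `f` and bounded measurable `φ`,
`E[F·f(F)·φ(A)] = E[A·f'(F)·φ(A)]`. -/
theorem gaussian_mixture_integration_by_parts
    {Ω : Type*} [MeasurableSpace Ω] (P : Measure Ω) [IsProbabilityMeasure P]
    (F A : Ω → ℝ) (hFmeas : Measurable F) (hAmeas : Measurable A)
    (hApos : ∀ ω, 0 ≤ A ω) (hAint : Integrable A P)
    (hcond : P.map (fun ω => (A ω, F ω)) =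
      (P.map A).bind (fun a => (gaussianReal 0 (Real.toNNReal a)).map (fun x => (a, x))))
    (f f' : ℝ → ℝ) (hf : ∀ x, HasDerivAt f (f' x) x)
    (hf'cont : Continuous f') (L : NNReal) (hLip : LipschitzWith L f)
    (φ : ℝ → ℝ) (hφmeas : Measurable φ) (Cφ : ℝ) (hφbd : ∀ x, |φ x| ≤ Cφ) :
    ∫ ω, F ω * f (F ω) * φ (A ω) ∂P = ∫ ω, A ω * f' (F ω) * φ (A ω) ∂P := by
  classical
  have hfc : Continuous f := cont_of_hasDerivAt hf
  have hCφ0 : 0 ≤ Cφ := le_trans (abs_nonneg (φ 0)) (hφbd 0)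
  set μ : Measure ℝ := P.map A with hμ
  have hμprob : IsProbabilityMeasure μ := Measure.isProbabilityMeasure_map hAmeas.aemeasurable
  set κ : Kernel ℝ ℝ := ⟨fun a => gaussianReal 0 (Real.toNNReal a), measurable_gauss_fam⟩ with hκ
  have hκapp : ∀ a, κ a = gaussianReal 0 (Real.toNNReal a) := fun a => rfl
  have hκmarkov : IsMarkovKernel κ := ⟨fun a => by rw [hκapp]; infer_instance⟩
  -- `|a|` is integrable w.r.t. `μ`
  have hidint : Integrable (fun a : ℝ => a) μ := by
    rw [hμ]
    exact (integrable_map_measure aestronglyMeasurable_id hAmeas.aemeasurable).mpr hAint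
  have habsint : Integrable (fun a : ℝ => |a|) μ := hidint.abs
  -- the joint law as a compProd
  have hbind : P.map (fun ω => (A ω, F ω)) = μ ⊗ₘ κ := by
    rw [hcond]
    have hm : Measurable fun a : ℝ => (gaussianReal 0 (Real.toNNReal a)).map (fun x => (a, x)) := by
      refine Measure.measurable_of_measurable_coe _ fun t ht => ?_
      simp_rw [Measure.map_apply measurable_prodMk_left ht]
      exact Kernel.measurable_kernel_prodMk_left (κ := κ) ht
    ext s hs
    rw [Measure.compProd_apply hs, Measure.bind_apply hs hm.aemeasurable]
    congr 1
    funext a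
    rw [Measure.map_apply measurable_prodMk_left hs, hκapp]
  -- a.e. nonnegativity of the variance variable
  have hae : ∀ᵐ a ∂μ, 0 ≤ a := by
    rw [hμ]
    exact (ae_map_iff hAmeas.aemeasurable measurableSet_Ici).2
      (Filter.Eventually.of_forall hApos)
  -- the two integrands on the product space
  set g : ℝ × ℝ → ℝ := fun p => p.2 * f p.2 * φ p.1 with hg
  set h : ℝ × ℝ → ℝ := fun p => p.1 * f' p.2 * φ p.1 with hh
  have hgmeas : Measurable g :=
    (measurable_snd.mul (hfc.measurable.comp measurable_snd)).mul (hφmeas.comp measurable_fst)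
  have hhmeas : Measurable h :=
    (measurable_fst.mul (hf'cont.measurable.comp measurable_snd)).mul (hφmeas.comp measurable_fst)
  -- pointwise bound for the section of `g`
  have hgbd : ∀ a x : ℝ, |x * f x * φ a| ≤ 0 + Cφ * |f 0| * |x| + Cφ * (L:ℝ) * x ^ 2 := by
    intro a x
    have h1 := abs_le_of_lipschitz hLip x
    have h2 := hφbd a
    have h3 : (0:ℝ) ≤ |x| := abs_nonneg x
    calc |x * f x * φ a| = |x| * |f x| * |φ a| := by rw [abs_mul, abs_mul]
      _ ≤ |x| * (|f 0| + (L:ℝ) * |x|) * Cφ := by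
          apply mul_le_mul (mul_le_mul_of_nonneg_left h1 h3) h2 (abs_nonneg _)
          positivity
      _ = Cφ * |f 0| * |x| + Cφ * (L:ℝ) * (|x| * |x|) := by ring
      _ = 0 + Cφ * |f 0| * |x| + Cφ * (L:ℝ) * x ^ 2 := by
          rw [abs_mul_abs_self, ← pow_two]; ring
  -- sections of `g` are integrable
  have hgsec : ∀ a : ℝ, Integrable (fun x => x * f x * φ a) (κ a) := by
    intro a
    rw [hκapp]
    exact integrable_gaussianReal_of_bound _
      ((continuous_id.mul hfc).mul continuous_const).aestronglyMeasurable
      ((continuous_id.mul hfc).mul continuous_const).stronglyMeasurable (hgbd a)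
  have hhsec : ∀ a : ℝ, Integrable (fun x => a * f' x * φ a) (κ a) := by
    intro a
    rw [hκapp]
    refine integrable_gaussianReal_of_bound _
      ((continuous_const.mul hf'cont).mul continuous_const).aestronglyMeasurable
      ((continuous_const.mul hf'cont).mul continuous_const).stronglyMeasurable
      (a := |a| * (L:ℝ) * Cφ) (b := 0) (c := 0) fun x => ?_
    have h1 := abs_deriv_le hf hLip x
    have h2 := hφbd a
    calc |a * f' x * φ a| = |a| * |f' x| * |φ a| := by rw [abs_mul, abs_mul]
      _ ≤ |a| * (L:ℝ) * Cφ := by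
          apply mul_le_mul (mul_le_mul_of_nonneg_left h1 (abs_nonneg a)) h2 (abs_nonneg _)
          positivity
      _ = |a| * (L:ℝ) * Cφ + 0 * |x| + 0 * x ^ 2 := by ring
  -- integral of the norm of sections of `g` is suitably bounded
  have hgnormbd : ∀ a : ℝ, 0 ≤ a →
      ∫ x, ‖x * f x * φ a‖ ∂(κ a) ≤ Cφ * |f 0| * (1 + a) + Cφ * (L:ℝ) * a := by
    intro a ha
    have hta : ((Real.toNNReal a : ℝ≥0) : ℝ) = a := Real.coe_toNNReal a ha
    rw [hκapp]
    set γ := gaussianReal 0 (Real.toNNReal a) with hγ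
    have hint1 : Integrable (fun x : ℝ => Cφ * |f 0| * |x| + Cφ * (L:ℝ) * x ^ 2) γ :=
      ((integrable_abs _).const_mul _).add ((integrable_sq _).const_mul _)
    have hsgi : Integrable (fun x => x * f x * φ a) γ := by rw [hγ]; exact hκapp a ▸ hgsec a
    have hmono := integral_mono hsgi.norm hint1 (fun x => by
      have := hgbd a x
      simpa [Real.norm_eq_abs, abs_mul] using this)
    refine hmono.trans ?_
    rw [integral_add ((integrable_abs _).const_mul _) ((integrable_sq _).const_mul _),
      integral_const_mul, integral_const_mul, integral_sq, hta]
    have h1 : ∫ x, |x| ∂γ ≤ 1 + a := by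
      have := integral_abs_le (Real.toNNReal a)
      rwa [hta] at this
    have h2 : (0:ℝ) ≤ Cφ * |f 0| := by positivity
    nlinarith [mul_le_mul_of_nonneg_left h1 h2]
  -- integrability of `g` on the product space
  have hgint : Integrable g (μ ⊗ₘ κ) := by
    rw [Measure.integrable_compProd_iff hgmeas.aestronglyMeasurable]
    constructor
    · exact Filter.Eventually.of_forall fun a => hgsec a
    · have hbound : ∀ᵐ a ∂μ, ‖∫ x, ‖g (a, x)‖ ∂(κ a)‖ ≤
          Cφ * |f 0| * (1 + |a|) + Cφ * (L:ℝ) * |a| := by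
        filter_upwards [hae] with a ha
        rw [Real.norm_eq_abs, abs_of_nonneg (integral_nonneg fun x => norm_nonneg _),
          abs_of_nonneg ha]
        exact hgnormbd a ha
      have hintB : Integrable (fun a : ℝ => Cφ * |f 0| * (1 + |a|) + Cφ * (L:ℝ) * |a|) μ :=
        (((integrable_const 1).add habsint).const_mul _).add (habsint.const_mul _)
      refine hintB.mono' ?_ hbound
      exact (hgmeas.norm.stronglyMeasurable.integral_kernel_prod_right' (κ := κ)).aestronglyMeasurable
  -- integrability of `h` on the product space
  have hhint : Integrable h (μ ⊗ₘ κ) := by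
    rw [Measure.integrable_compProd_iff hhmeas.aestronglyMeasurable]
    constructor
    · exact Filter.Eventually.of_forall fun a => hhsec a
    · have hbound : ∀ᵐ a ∂μ, ‖∫ x, ‖h (a, x)‖ ∂(κ a)‖ ≤ |a| * (L:ℝ) * Cφ := by
        refine Filter.Eventually.of_forall fun a => ?_
        rw [Real.norm_eq_abs, abs_of_nonneg (integral_nonneg fun x => norm_nonneg _)]
        have hb : ∀ x : ℝ, ‖h (a, x)‖ ≤ |a| * (L:ℝ) * Cφ := by
          intro x
          have h1 := abs_deriv_le hf hLip x
          have h2 := hφbd a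
          rw [Real.norm_eq_abs]
          calc |a * f' x * φ a| = |a| * |f' x| * |φ a| := by rw [abs_mul, abs_mul]
            _ ≤ |a| * (L:ℝ) * Cφ := by
                apply mul_le_mul (mul_le_mul_of_nonneg_left h1 (abs_nonneg a)) h2 (abs_nonneg _)
                positivity
        have := integral_mono (hhsec a).norm (integrable_const (|a| * (L:ℝ) * Cφ)) hb
        rwa [integral_const, probReal_univ, one_smul] at this
      have hintB : Integrable (fun a : ℝ => |a| * (L:ℝ) * Cφ) μ := by
        have : (fun a : ℝ => |a| * (L:ℝ) * Cφ) = fun a : ℝ => ((L:ℝ) * Cφ) * |a| := by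
          funext a; ring
        rw [this]
        exact habsint.const_mul _
      refine hintB.mono' ?_ hbound
      exact (hhmeas.norm.stronglyMeasurable.integral_kernel_prod_right' (κ := κ)).aestronglyMeasurable
  -- rewrite both sides as iterated integrals
  have hmap : AEMeasurable (fun ω => (A ω, F ω)) P := (hAmeas.prodMk hFmeas).aemeasurable
  have hLHS : ∫ ω, F ω * f (F ω) * φ (A ω) ∂P = ∫ a, ∫ x, x * f x * φ a ∂(κ a) ∂μ := by
    have h1 : ∫ ω, F ω * f (F ω) * φ (A ω) ∂P = ∫ p, g p ∂(P.map fun ω => (A ω, F ω)) :=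
      (integral_map hmap hgmeas.aestronglyMeasurable).symm
    rw [h1, hbind, Measure.integral_compProd hgint]
  have hRHS : ∫ ω, A ω * f' (F ω) * φ (A ω) ∂P = ∫ a, ∫ x, a * f' x * φ a ∂(κ a) ∂μ := by
    have h1 : ∫ ω, A ω * f' (F ω) * φ (A ω) ∂P = ∫ p, h p ∂(P.map fun ω => (A ω, F ω)) :=
      (integral_map hmap hhmeas.aestronglyMeasurable).symm
    rw [h1, hbind, Measure.integral_compProd hhint]
  rw [hLHS, hRHS]
  refine integral_congr_ae ?_
  filter_upwards [hae] with a ha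
  have hta : ((Real.toNNReal a : ℝ≥0) : ℝ) = a := Real.coe_toNNReal a ha
  rw [hκapp]
  have hL : ∫ x, x * f x * φ a ∂(gaussianReal 0 (Real.toNNReal a))
      = (∫ x, x * f x ∂(gaussianReal 0 (Real.toNNReal a))) * φ a := by
    rw [← integral_mul_const]
  have hR : ∫ x, a * f' x * φ a ∂(gaussianReal 0 (Real.toNNReal a))
      = (a * φ a) * ∫ x, f' x ∂(gaussianReal 0 (Real.toNNReal a)) := by
    rw [← integral_const_mul]
    congr 1; funext x; ring
  rw [hL, hR, gauss_ibp hf hf'cont hLip, hta]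
  ring
end

section
/- Let F be a centered random variable with variance σ² > 0 such that, conditionally on a square-integrable random variable A ≥ 0, F is centered Gaussian with variance A, and let Z ~ N(0, σ²). Then the total variation distance satisfies d_TV(F, Z) ≤ (8/σ⁴)·Var(A). -/
open MeasureTheory ProbabilityTheory Real Set Filter

namespace GaussMix

noncomputable def p (a x : ℝ) : ℝ := (Real.sqrt (2*π*a))⁻¹ * Real.exp (-x^2/(2*a))
noncomputable def p1 (a x : ℝ) : ℝ := p a x * (x^2 - a) / (2*a^2)
noncomputable def p2 (a x : ℝ) : ℝ := p a x * (x^4 - 6*a*x^2 + 3*a^2) / (4*a^4)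

lemma p_nonneg (a x : ℝ) : 0 ≤ p a x := by
  unfold p; positivity

lemma p_eq_gaussianPDFReal {a : ℝ} (ha : 0 < a) (x : ℝ) :
    p a x = gaussianPDFReal 0 a.toNNReal x := by
  simp [p, gaussianPDFReal, Real.coe_toNNReal _ ha.le]

lemma p_eq' (a x : ℝ) :
    p a x = (Real.sqrt (2*π*a))⁻¹ * Real.exp (-(2*a)⁻¹ * x^2) := by
  rw [p]; congr 1; ring

lemma hasDerivAt_p {a : ℝ} (ha : 0 < a) (x : ℝ) :
    HasDerivAt (fun t => p t x) (p1 a x) a := by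
  have h2pa : (0:ℝ) < 2*π*a := by positivity
  have hs : Real.sqrt (2*π*a) ≠ 0 := by positivity
  have h1 : HasDerivAt (fun t : ℝ => Real.sqrt (2*π*t)) (π / Real.sqrt (2*π*a)) a := by
    have h := (Real.hasDerivAt_sqrt h2pa.ne').comp a ((hasDerivAt_id a).const_mul (2*π))
    refine h.congr_deriv ?_
    field_simp
  have hinv : HasDerivAt (fun t : ℝ => (Real.sqrt (2*π*t))⁻¹)
      (-(π / Real.sqrt (2*π*a)) / (Real.sqrt (2*π*a))^2) a := h1.inv hs
  have hexp : HasDerivAt (fun t : ℝ => Real.exp (-x^2/(2*t)))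
      (Real.exp (-x^2/(2*a)) * (x^2 / (2*a^2))) a := by
    have hden : HasDerivAt (fun t : ℝ => 2*t) 2 a := by
      simpa using (hasDerivAt_id a).const_mul 2
    have h0 : HasDerivAt (fun t : ℝ => -x^2/(2*t))
        ((0 * (2*a) - (-x^2) * 2) / (2*a)^2) a :=
      (hasDerivAt_const a (-x^2)).div hden (by positivity)
    have h0' : (0 * (2*a) - (-x^2) * 2) / (2*a)^2 = x^2 / (2*a^2) := by
      field_simp; ring
    rw [h0'] at h0
    exact h0.exp
  have h2 := hinv.fun_mul hexp
  refine h2.congr_deriv ?_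
  unfold p1 p
  set s := Real.sqrt (2*π*a) with hs_def
  have hs2 : s^2 = 2*π*a := Real.sq_sqrt h2pa.le
  have hπ : π = s^2/(2*a) := by rw [hs2]; field_simp
  rw [hπ]
  field_simp
  ring

lemma hasDerivAt_p1 {a : ℝ} (ha : 0 < a) (x : ℝ) :
    HasDerivAt (fun t => p1 t x) (p2 a x) a := by
  have hq : HasDerivAt (fun t : ℝ => (x^2 - t) / (2*t^2))
      (((-1) * (2*a^2) - (x^2 - a) * (4*a)) / (2*a^2)^2) a := by
    have hnum : HasDerivAt (fun t : ℝ => x^2 - t) (-1) a := by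
      simpa using (hasDerivAt_const a (x^2)).fun_sub (hasDerivAt_id a)
    have hden : HasDerivAt (fun t : ℝ => 2*t^2) (4*a) a := by
      have := (hasDerivAt_pow 2 a).const_mul (2:ℝ)
      refine this.congr_deriv ?_
      push_cast
      ring
    exact hnum.div hden (by positivity)
  have h := (hasDerivAt_p ha x).fun_mul hq
  have hfun : (fun t => p t x * ((x^2 - t) / (2*t^2))) = fun t => p1 t x := by
    funext t; rw [p1]; ring
  rw [hfun] at h
  refine h.congr_deriv ?_
  unfold p2 p1
  field_simp
  ring


lemma integrable_pow_mul_gauss {b : ℝ} (hb : 0 < b) (n : ℕ) :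
    Integrable fun x : ℝ => x^n * Real.exp (-b*x^2) := by
  have h := integrable_rpow_mul_exp_neg_mul_sq hb
    (s := (n:ℝ)) (lt_of_lt_of_le neg_one_lt_zero (Nat.cast_nonneg n))
  simpa [Real.rpow_natCast] using h

lemma tendsto_pow_mul_gauss_atTop {b : ℝ} (hb : 0 < b) (n : ℕ) :
    Tendsto (fun x : ℝ => x^n * Real.exp (-b*x^2)) atTop (nhds 0) := by
  have h := rpow_mul_exp_neg_mul_sq_isLittleO_exp_neg hb (n:ℝ)
  rw [show (fun x : ℝ => x ^ (n:ℝ) * Real.exp (-b*x^2))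
      = fun x : ℝ => x ^ n * Real.exp (-b*x^2) from funext fun x => by
        rw [Real.rpow_natCast]] at h
  have h2 : Tendsto (fun x : ℝ => Real.exp (-(1/2) * x)) atTop (nhds 0) := by
    have h3 : Tendsto (fun x : ℝ => -(1/2) * x) atTop atBot := by
      have h5 : Tendsto (fun x : ℝ => (1/2) * x) atTop atTop :=
        (tendsto_id (α := ℝ) (x := atTop)).const_mul_atTop (by norm_num : (0:ℝ) < 1/2)
      have h6 := tendsto_neg_atTop_atBot.comp h5
      exact h6.congr fun x => by simp [Function.comp]
    exact Real.tendsto_exp_atBot.comp h3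
  exact h.trans_tendsto h2

lemma tendsto_pow_mul_gauss_atBot {b : ℝ} (hb : 0 < b) (n : ℕ) :
    Tendsto (fun x : ℝ => x^n * Real.exp (-b*x^2)) atBot (nhds 0) := by
  have h := (tendsto_pow_mul_gauss_atTop hb n).comp tendsto_neg_atBot_atTop
  have h2 := h.const_mul ((-1:ℝ)^n)
  rw [mul_zero] at h2
  convert h2 using 1
  funext x
  simp only [Function.comp]
  rw [neg_sq, ← mul_assoc, ← mul_pow]
  norm_num

lemma integral_pow_mul_gauss_rec {b : ℝ} (hb : 0 < b) (n : ℕ) :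
    ∫ x : ℝ, x^(n+2) * Real.exp (-b*x^2) =
      ((n:ℝ)+1)/(2*b) * ∫ x : ℝ, x^n * Real.exp (-b*x^2) := by
  have hderiv : ∀ x : ℝ, HasDerivAt (fun y : ℝ => y^(n+1) * Real.exp (-b*y^2))
      (((n:ℝ)+1) * (x^n * Real.exp (-b*x^2)) - 2*b*(x^(n+2) * Real.exp (-b*x^2))) x := by
    intro x
    have h1 : HasDerivAt (fun y : ℝ => y^(n+1)) (((n:ℝ)+1) * x^n) x := by
      simpa using hasDerivAt_pow (n+1) x
    have h3 : HasDerivAt (fun y : ℝ => -b*y^2) (-b*(2*x)) x := by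
      have := (hasDerivAt_pow 2 x).const_mul (-b)
      refine this.congr_deriv ?_
      push_cast; ring
    have := h1.fun_mul h3.exp
    refine this.congr_deriv ?_
    push_cast; ring
  have i1 := (integrable_pow_mul_gauss hb n).const_mul ((n:ℝ)+1)
  have i2 := (integrable_pow_mul_gauss hb (n+2)).const_mul (2*b)
  have hint := i1.sub i2
  have key := integral_of_hasDerivAt_of_tendsto hderiv hint
    (tendsto_pow_mul_gauss_atBot hb (n+1)) (tendsto_pow_mul_gauss_atTop hb (n+1))
  rw [sub_zero] at key
  rw [integral_sub i1 i2, integral_const_mul, integral_const_mul] at key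
  have hb' : (2*b) ≠ 0 := by positivity
  rw [div_mul_eq_mul_div, eq_div_iff hb']
  linarith [key]

lemma rec_concrete {b : ℝ} (hb : 0 < b) :
    (∫ x : ℝ, x^2 * Real.exp (-b*x^2)) = 1/(2*b) * ∫ x : ℝ, Real.exp (-b*x^2) := by
  have := integral_pow_mul_gauss_rec hb 0
  simpa using this


variable {a : ℝ}

lemma b_pos (ha : 0 < a) : 0 < (2*a)⁻¹ := by positivity

lemma integrable_pow_mul_p (ha : 0 < a) (k : ℕ) :
    Integrable fun x : ℝ => x^k * p a x := by
  have h := (integrable_pow_mul_gauss (b_pos ha) k).const_mul (Real.sqrt (2*π*a))⁻¹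
  refine h.congr (Eventually.of_forall fun x => ?_)
  simp only [p_eq']; ring

lemma integrable_p (ha : 0 < a) : Integrable (p a) := by
  simpa using integrable_pow_mul_p ha 0

lemma integral_p (ha : 0 < a) : ∫ x : ℝ, p a x = 1 := by
  have hv : a.toNNReal ≠ 0 := by
    rw [Ne, Real.toNNReal_eq_zero]; exact not_le.mpr ha
  simp_rw [p_eq_gaussianPDFReal ha]
  exact integral_gaussianPDFReal_eq_one 0 hv

lemma CI (ha : 0 < a) :
    (Real.sqrt (2*π*a))⁻¹ * ∫ x : ℝ, Real.exp (-(2*a)⁻¹*x^2) = 1 := by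
  rw [← integral_const_mul]
  rw [show (fun x : ℝ => (Real.sqrt (2*π*a))⁻¹ * Real.exp (-(2*a)⁻¹*x^2))
    = p a from funext fun x => (p_eq' a x).symm]
  exact integral_p ha

lemma integral_sq_p (ha : 0 < a) : ∫ x : ℝ, x^2 * p a x = a := by
  have hrec := integral_pow_mul_gauss_rec (b_pos ha) 0
  simp only [pow_zero, one_mul, Nat.cast_zero, zero_add] at hrec
  have ha' : (1:ℝ)/(2*(2*a)⁻¹) = a := by field_simp
  calc ∫ x : ℝ, x^2 * p a x
      = (Real.sqrt (2*π*a))⁻¹ * ∫ x : ℝ, x^2 * Real.exp (-(2*a)⁻¹*x^2) := by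
        rw [← integral_const_mul]; congr 1; funext x; rw [p_eq']; ring
    _ = a * ((Real.sqrt (2*π*a))⁻¹ * ∫ x : ℝ, Real.exp (-(2*a)⁻¹*x^2)) := by
        rw [hrec, ha']; ring
    _ = a := by rw [CI ha, mul_one]

lemma integral_pow4_p (ha : 0 < a) : ∫ x : ℝ, x^4 * p a x = 3*a^2 := by
  have hrec := integral_pow_mul_gauss_rec (b_pos ha) 2
  have ha' : (3:ℝ)/(2*(2*a)⁻¹) = 3*a := by field_simp
  calc ∫ x : ℝ, x^4 * p a x
      = (Real.sqrt (2*π*a))⁻¹ * ∫ x : ℝ, x^4 * Real.exp (-(2*a)⁻¹*x^2) := by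
        rw [← integral_const_mul]; congr 1; funext x; rw [p_eq']; ring
    _ = (3*a) * ((Real.sqrt (2*π*a))⁻¹ * ∫ x : ℝ, x^2 * Real.exp (-(2*a)⁻¹*x^2)) := by
        rw [show (4:ℕ) = 2+2 by norm_num, hrec]
        have h23 : ((2:ℕ):ℝ)+1 = 3 := by norm_num
        rw [h23, ha']
        ring
    _ = (3*a) * ∫ x : ℝ, x^2 * p a x := by
        congr 1; rw [← integral_const_mul]; congr 1; funext x; rw [p_eq']; ring
    _ = 3*a^2 := by rw [integral_sq_p ha]; ring

lemma integrable_p1 (ha : 0 < a) : Integrable (fun x => p1 a x) := by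
  have h := ((integrable_pow_mul_p ha 2).const_mul (1/(2*a^2))).sub
    ((integrable_p ha).const_mul (1/(2*a)))
  refine h.congr (Eventually.of_forall fun x => ?_)
  simp only [p1, Pi.sub_apply]
  field_simp

lemma integrable_p2 (ha : 0 < a) : Integrable (fun x => p2 a x) := by
  have h := (((integrable_pow_mul_p ha 4).const_mul (1/(4*a^4))).sub
    ((integrable_pow_mul_p ha 2).const_mul (6/(4*a^3)))).add
    ((integrable_p ha).const_mul (3/(4*a^2)))
  refine h.congr (Eventually.of_forall fun x => ?_)
  simp only [p2, Pi.add_apply, Pi.sub_apply]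
  field_simp

lemma abs_p1_le (ha : 0 < a) (x : ℝ) :
    |p1 a x| ≤ (x^2 + a) / (2*a^2) * p a x := by
  have h2 : |x^2 - a| ≤ x^2 + a := by
    rcases abs_cases (x^2 - a) with ⟨h,_⟩|⟨h,_⟩ <;> nlinarith [sq_nonneg x]
  calc |p1 a x| = p a x * |x^2-a| / (2*a^2) := by
        rw [p1, abs_div, abs_mul, abs_of_nonneg (p_nonneg a x),
          abs_of_nonneg (by positivity : (0:ℝ) ≤ 2*a^2)]
    _ ≤ p a x * (x^2+a) / (2*a^2) :=
        (div_le_div_iff_of_pos_right (by positivity)).mpr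
          (mul_le_mul_of_nonneg_left h2 (p_nonneg a x))
    _ = (x^2 + a) / (2*a^2) * p a x := by ring

lemma abs_p2_le (ha : 0 < a) (x : ℝ) :
    |p2 a x| ≤ (x^4 + 6*a*x^2 + 3*a^2) / (4*a^4) * p a x := by
  have h2 : |x^4 - 6*a*x^2 + 3*a^2| ≤ x^4 + 6*a*x^2 + 3*a^2 := by
    rcases abs_cases (x^4 - 6*a*x^2 + 3*a^2) with ⟨h,_⟩|⟨h,_⟩ <;>
      nlinarith [sq_nonneg x, sq_nonneg (x^2), sq_nonneg a, mul_nonneg ha.le (sq_nonneg x)]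
  calc |p2 a x| = p a x * |x^4 - 6*a*x^2 + 3*a^2| / (4*a^4) := by
        rw [p2, abs_div, abs_mul, abs_of_nonneg (p_nonneg a x),
          abs_of_nonneg (by positivity : (0:ℝ) ≤ 4*a^4)]
    _ ≤ p a x * (x^4 + 6*a*x^2 + 3*a^2) / (4*a^4) :=
        (div_le_div_iff_of_pos_right (by positivity)).mpr
          (mul_le_mul_of_nonneg_left h2 (p_nonneg a x))
    _ = (x^4 + 6*a*x^2 + 3*a^2) / (4*a^4) * p a x := by ring

lemma integral_abs_p1_le (ha : 0 < a) : ∫ x : ℝ, |p1 a x| ≤ 1/a := by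
  have hbd : Integrable (fun x : ℝ => (x^2 + a) / (2*a^2) * p a x) := by
    have h := ((integrable_pow_mul_p ha 2).const_mul (1/(2*a^2))).add
      ((integrable_p ha).const_mul (a/(2*a^2)))
    refine h.congr (Eventually.of_forall fun x => ?_)
    simp only [Pi.add_apply]
    field_simp
  have h1 : ∫ x : ℝ, |p1 a x| ≤ ∫ x : ℝ, (x^2 + a) / (2*a^2) * p a x :=
    integral_mono (integrable_p1 ha).abs hbd (abs_p1_le ha)
  have h2 : ∫ x : ℝ, (x^2 + a) / (2*a^2) * p a x = 1/a := by
    have e : (fun x : ℝ => (x^2 + a) / (2*a^2) * p a x)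
        = fun x : ℝ => (1/(2*a^2)) * (x^2 * p a x) + (a/(2*a^2)) * p a x := by
      funext x; field_simp
    rw [e, integral_add ((integrable_pow_mul_p ha 2).const_mul _)
      ((integrable_p ha).const_mul _), integral_const_mul, integral_const_mul,
      integral_sq_p ha, integral_p ha]
    field_simp
    ring
  linarith

lemma integral_abs_p2_le (ha : 0 < a) : ∫ x : ℝ, |p2 a x| ≤ 3/a^2 := by
  have hbd : Integrable (fun x : ℝ => (x^4 + 6*a*x^2 + 3*a^2) / (4*a^4) * p a x) := by
    have h := (((integrable_pow_mul_p ha 4).const_mul (1/(4*a^4))).add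
      ((integrable_pow_mul_p ha 2).const_mul (6*a/(4*a^4)))).add
      ((integrable_p ha).const_mul (3*a^2/(4*a^4)))
    refine h.congr (Eventually.of_forall fun x => ?_)
    simp only [Pi.add_apply]
    field_simp
  have h1 : ∫ x : ℝ, |p2 a x| ≤ ∫ x : ℝ, (x^4 + 6*a*x^2 + 3*a^2) / (4*a^4) * p a x :=
    integral_mono (integrable_p2 ha).abs hbd (abs_p2_le ha)
  have h2 : ∫ x : ℝ, (x^4 + 6*a*x^2 + 3*a^2) / (4*a^4) * p a x = 3/a^2 := by
    have e : (fun x : ℝ => (x^4 + 6*a*x^2 + 3*a^2) / (4*a^4) * p a x)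
        = fun x : ℝ => ((1/(4*a^4)) * (x^4 * p a x) + (6*a/(4*a^4)) * (x^2 * p a x))
            + (3*a^2/(4*a^4)) * p a x := by
      funext x; field_simp
    have i1 : Integrable (fun x : ℝ => 1/(4*a^4) * (x^4 * p a x)) volume :=
      (integrable_pow_mul_p ha 4).const_mul _
    have i2 : Integrable (fun x : ℝ => 6*a/(4*a^4) * (x^2 * p a x)) volume :=
      (integrable_pow_mul_p ha 2).const_mul _
    have i3 : Integrable (fun x : ℝ => 3*a^2/(4*a^4) * p a x) volume :=
      (integrable_p ha).const_mul _
    have i12 : Integrable (fun x : ℝ => 1/(4*a^4) * (x^4 * p a x)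
        + 6*a/(4*a^4) * (x^2 * p a x)) volume := i1.add i2
    rw [e, integral_add i12 i3, integral_add i1 i2,
      integral_const_mul, integral_const_mul, integral_const_mul,
      integral_pow4_p ha, integral_sq_p ha, integral_p ha]
    field_simp
    ring
  linarith

lemma setIntegral_abs_p1_le (ha : 0 < a) (B : Set ℝ) :
    |∫ x in B, p1 a x| ≤ 1/a := by
  calc |∫ x in B, p1 a x| ≤ ∫ x in B, |p1 a x| := by
        simpa [Real.norm_eq_abs] using norm_integral_le_integral_norm (μ := volume.restrict B) (fun x => p1 a x)
    _ ≤ ∫ x : ℝ, |p1 a x| :=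
        setIntegral_le_integral (integrable_p1 ha).abs (Eventually.of_forall fun x => abs_nonneg _)
    _ ≤ 1/a := integral_abs_p1_le ha

lemma setIntegral_abs_p2_le (ha : 0 < a) (B : Set ℝ) :
    |∫ x in B, p2 a x| ≤ 3/a^2 := by
  calc |∫ x in B, p2 a x| ≤ ∫ x in B, |p2 a x| := by
        simpa [Real.norm_eq_abs] using norm_integral_le_integral_norm (μ := volume.restrict B) (fun x => p2 a x)
    _ ≤ ∫ x : ℝ, |p2 a x| :=
        setIntegral_le_integral (integrable_p2 ha).abs (Eventually.of_forall fun x => abs_nonneg _)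
    _ ≤ 3/a^2 := integral_abs_p2_le ha

lemma continuous_p (t : ℝ) : Continuous (fun x => p t x) := by
  unfold p
  fun_prop

lemma continuous_p1 (t : ℝ) : Continuous (fun x => p1 t x) := by
  unfold p1
  exact ((continuous_p t).mul (by fun_prop)).div_const _

lemma ball_mem_props {a₀ t : ℝ} (ha₀ : 0 < a₀) (ht : t ∈ Metric.ball a₀ (a₀/2)) :
    a₀/2 < t ∧ t < 3*a₀/2 := by
  rw [Metric.mem_ball, Real.dist_eq, abs_sub_lt_iff] at ht
  constructor <;> linarith [ht.1, ht.2]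

noncomputable def bd1 (a₀ x : ℝ) : ℝ :=
  (Real.sqrt (π*a₀))⁻¹ * ((x^2 + 3*a₀/2) / (2*(a₀/2)^2)) * Real.exp (-(3*a₀)⁻¹ * x^2)

noncomputable def bd2 (a₀ x : ℝ) : ℝ :=
  (Real.sqrt (π*a₀))⁻¹ * ((x^4 + 6*(3*a₀/2)*x^2 + 3*(3*a₀/2)^2) / (4*(a₀/2)^4))
    * Real.exp (-(3*a₀)⁻¹ * x^2)

lemma integrable_bd1 {a₀ : ℝ} (ha₀ : 0 < a₀) : Integrable (bd1 a₀) := by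
  have hb : (0:ℝ) < (3*a₀)⁻¹ := by positivity
  have h2 := (integrable_pow_mul_gauss hb 2).const_mul
    ((Real.sqrt (π*a₀))⁻¹ / (2*(a₀/2)^2))
  have h0 := (integrable_pow_mul_gauss hb 0).const_mul
    ((Real.sqrt (π*a₀))⁻¹ * (3*a₀/2) / (2*(a₀/2)^2))
  refine (h2.add h0).congr (Eventually.of_forall fun x => ?_)
  simp only [bd1, Pi.add_apply, pow_zero, one_mul]
  field_simp

lemma integrable_bd2 {a₀ : ℝ} (ha₀ : 0 < a₀) : Integrable (bd2 a₀) := by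
  have hb : (0:ℝ) < (3*a₀)⁻¹ := by positivity
  have h4 := (integrable_pow_mul_gauss hb 4).const_mul
    ((Real.sqrt (π*a₀))⁻¹ / (4*(a₀/2)^4))
  have h2 := (integrable_pow_mul_gauss hb 2).const_mul
    ((Real.sqrt (π*a₀))⁻¹ * (6*(3*a₀/2)) / (4*(a₀/2)^4))
  have h0 := (integrable_pow_mul_gauss hb 0).const_mul
    ((Real.sqrt (π*a₀))⁻¹ * (3*(3*a₀/2)^2) / (4*(a₀/2)^4))
  refine ((h4.add h2).add h0).congr (Eventually.of_forall fun x => ?_)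
  simp only [bd2, Pi.add_apply, pow_zero, one_mul]
  field_simp

lemma p_le_aux {a₀ t : ℝ} (ha₀ : 0 < a₀) (ht : t ∈ Metric.ball a₀ (a₀/2)) (x : ℝ) :
    p t x ≤ (Real.sqrt (π*a₀))⁻¹ * Real.exp (-(3*a₀)⁻¹ * x^2) := by
  obtain ⟨h1, h2⟩ := ball_mem_props ha₀ ht
  have ht0 : 0 < t := lt_trans (by positivity) h1
  rw [p]
  have hsqrt : (Real.sqrt (2*π*t))⁻¹ ≤ (Real.sqrt (π*a₀))⁻¹ := by
    apply inv_anti₀ (by positivity)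
    apply Real.sqrt_le_sqrt
    nlinarith [Real.pi_pos]
  have hexp : Real.exp (-x^2/(2*t)) ≤ Real.exp (-(3*a₀)⁻¹ * x^2) := by
    apply Real.exp_le_exp.mpr
    have h3 : (3*a₀)⁻¹ * x^2 ≤ x^2/(2*t) := by
      rw [div_eq_inv_mul]
      apply mul_le_mul_of_nonneg_right ?_ (sq_nonneg x)
      apply inv_anti₀ (by positivity)
      linarith
    have h4 : -x^2/(2*t) = -(x^2/(2*t)) := by ring
    have h5 : -(3*a₀)⁻¹ * x^2 = -((3*a₀)⁻¹ * x^2) := by ring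
    rw [h4, h5, neg_le_neg_iff]
    exact h3
  calc (Real.sqrt (2*π*t))⁻¹ * Real.exp (-x^2/(2*t))
      ≤ (Real.sqrt (π*a₀))⁻¹ * Real.exp (-(3*a₀)⁻¹ * x^2) :=
        mul_le_mul hsqrt hexp (Real.exp_pos _).le (by positivity)

lemma abs_p1_le_bd1 {a₀ t : ℝ} (ha₀ : 0 < a₀) (ht : t ∈ Metric.ball a₀ (a₀/2)) (x : ℝ) :
    |p1 t x| ≤ bd1 a₀ x := by
  obtain ⟨h1, h2⟩ := ball_mem_props ha₀ ht
  have ht0 : 0 < t := lt_trans (by positivity) h1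
  have step1 := abs_p1_le ht0 x
  have step3 : (x^2 + t) / (2*t^2) ≤ (x^2 + 3*a₀/2) / (2*(a₀/2)^2) := by
    apply div_le_div₀ (by positivity) (by linarith) (by positivity)
    nlinarith
  calc |p1 t x| ≤ (x^2 + t) / (2*t^2) * p t x := step1
    _ ≤ (x^2 + 3*a₀/2) / (2*(a₀/2)^2) * ((Real.sqrt (π*a₀))⁻¹ * Real.exp (-(3*a₀)⁻¹ * x^2)) :=
        mul_le_mul step3 (p_le_aux ha₀ ht x) (p_nonneg t x) (by positivity)
    _ = bd1 a₀ x := by rw [bd1]; ring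

lemma abs_p2_le_bd2 {a₀ t : ℝ} (ha₀ : 0 < a₀) (ht : t ∈ Metric.ball a₀ (a₀/2)) (x : ℝ) :
    |p2 t x| ≤ bd2 a₀ x := by
  obtain ⟨h1, h2⟩ := ball_mem_props ha₀ ht
  have ht0 : 0 < t := lt_trans (by positivity) h1
  have step1 := abs_p2_le ht0 x
  have step3 : (x^4 + 6*t*x^2 + 3*t^2) / (4*t^4)
      ≤ (x^4 + 6*(3*a₀/2)*x^2 + 3*(3*a₀/2)^2) / (4*(a₀/2)^4) := by
    apply div_le_div₀ (by positivity) ?_ (by positivity) ?_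
    · nlinarith [sq_nonneg x]
    · nlinarith [pow_le_pow_left₀ (show (0:ℝ) ≤ a₀/2 by positivity) h1.le 4]
  calc |p2 t x| ≤ (x^4 + 6*t*x^2 + 3*t^2) / (4*t^4) * p t x := step1
    _ ≤ (x^4 + 6*(3*a₀/2)*x^2 + 3*(3*a₀/2)^2) / (4*(a₀/2)^4)
          * ((Real.sqrt (π*a₀))⁻¹ * Real.exp (-(3*a₀)⁻¹ * x^2)) :=
        mul_le_mul step3 (p_le_aux ha₀ ht x) (p_nonneg t x) (by positivity)
    _ = bd2 a₀ x := by rw [bd2]; ring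

lemma hasDerivAt_g {B : Set ℝ} (hB : MeasurableSet B) {a₀ : ℝ} (ha₀ : 0 < a₀) :
    HasDerivAt (fun t => ∫ x in B, p t x) (∫ x in B, p1 a₀ x) a₀ := by
  refine (hasDerivAt_integral_of_dominated_loc_of_deriv_le
    (Metric.ball_mem_nhds a₀ (by positivity : (0:ℝ) < a₀/2))
    (Eventually.of_forall fun t => (continuous_p t).aestronglyMeasurable.restrict)
    ((integrable_p ha₀).restrict)
    ((continuous_p1 a₀).aestronglyMeasurable.restrict)
    (Eventually.of_forall fun x t ht => ?_)
    ((integrable_bd1 ha₀).restrict)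
    (Eventually.of_forall fun x t ht => ?_)).2
  · rw [Real.norm_eq_abs]
    exact abs_p1_le_bd1 ha₀ ht x
  · exact hasDerivAt_p (lt_trans (by positivity) (ball_mem_props ha₀ ht).1) x

lemma hasDerivAt_g1 {B : Set ℝ} (hB : MeasurableSet B) {a₀ : ℝ} (ha₀ : 0 < a₀) :
    HasDerivAt (fun t => ∫ x in B, p1 t x) (∫ x in B, p2 a₀ x) a₀ := by
  have hc2 : Continuous (fun x => p2 a₀ x) := by
    unfold p2
    exact ((continuous_p a₀).mul (by fun_prop)).div_const _
  refine (hasDerivAt_integral_of_dominated_loc_of_deriv_le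
    (Metric.ball_mem_nhds a₀ (by positivity : (0:ℝ) < a₀/2))
    (Eventually.of_forall fun t => (continuous_p1 t).aestronglyMeasurable.restrict)
    ((integrable_p1 ha₀).restrict)
    (hc2.aestronglyMeasurable.restrict)
    (Eventually.of_forall fun x t ht => ?_)
    ((integrable_bd2 ha₀).restrict)
    (Eventually.of_forall fun x t ht => ?_)).2
  · rw [Real.norm_eq_abs]
    exact abs_p2_le_bd2 ha₀ ht x
  · exact hasDerivAt_p1 (lt_trans (by positivity) (ball_mem_props ha₀ ht).1) x

lemma integral_abs_interval (c : ℝ) : (∫ u in (0:ℝ)..c, |u|) = c*|c|/2 := by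
  rcases le_or_gt 0 c with hc | hc
  · have h1 : ∀ u ∈ uIcc (0:ℝ) c, |u| = u := by
      intro u hu
      rw [uIcc_of_le hc] at hu
      exact abs_of_nonneg hu.1
    rw [intervalIntegral.integral_congr h1, integral_id, abs_of_nonneg hc]
    ring
  · have h1 : ∀ u ∈ uIcc (0:ℝ) c, |u| = -u := by
      intro u hu
      rw [uIcc_of_ge hc.le] at hu
      exact abs_of_nonpos hu.2
    rw [intervalIntegral.integral_congr h1, intervalIntegral.integral_neg,
      integral_id, abs_of_neg hc]
    ring

lemma taylor_bound {B : Set ℝ} (hB : MeasurableSet B) {m : ℝ} (hm : 0 < m)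
    {a : ℝ} (hmm : m/2 ≤ a) :
    |(∫ x in B, p a x) - (∫ x in B, p m x) - (∫ x in B, p1 m x) * (a - m)|
      ≤ 6/m^2 * (a-m)^2 := by
  set g : ℝ → ℝ := fun t => ∫ x in B, p t x with hg
  set g1f : ℝ → ℝ := fun t => ∫ x in B, p1 t x with hg1
  have hm2 : (0:ℝ) < m/2 := by positivity
  have hmI : m ∈ Ici (m/2) := by simp; linarith
  have haI : a ∈ Ici (m/2) := mem_Ici.mpr hmm
  have hsub : uIcc m a ⊆ Ici (m/2) := by
    intro t ht
    rcases Set.mem_uIcc.mp ht with ⟨h1,_⟩|⟨h1,_⟩ <;> (rw [mem_Ici]; linarith)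
  -- Lipschitz bound on g1f over Ici (m/2)
  have hlip : ∀ t ∈ Ici (m/2), |g1f t - g1f m| ≤ 12/m^2 * |t - m| := by
    intro t htI
    have hbd : ∀ u ∈ Ici (m/2), ‖∫ x in B, p2 u x‖ ≤ 12/m^2 := by
      intro u hu
      have hu0 : 0 < u := lt_of_lt_of_le hm2 hu
      rw [Real.norm_eq_abs]
      refine (setIntegral_abs_p2_le hu0 B).trans ?_
      rw [div_le_div_iff₀ (by positivity) (by positivity)]
      rw [mem_Ici] at hu
      nlinarith
    have key := Convex.norm_image_sub_le_of_norm_hasDerivWithin_le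
      (f := g1f) (f' := fun u => ∫ x in B, p2 u x) (s := Ici (m/2))
      (fun u hu => (hasDerivAt_g1 hB (lt_of_lt_of_le hm2 hu)).hasDerivWithinAt)
      hbd (convex_Ici (m/2)) hmI htI
    simpa [Real.norm_eq_abs] using key
  -- FTC for φ
  set L := g1f m with hL
  have hφderiv : ∀ t ∈ uIcc m a,
      HasDerivAt (fun t => g t - g m - L*(t-m)) (g1f t - L) t := by
    intro t ht
    have ht0 : 0 < t := lt_of_lt_of_le hm2 (hsub ht)
    have h2 : HasDerivAt (fun t : ℝ => L*(t-m)) L t := by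
      simpa using ((hasDerivAt_id t).sub_const m).const_mul L
    exact ((hasDerivAt_g hB ht0).sub_const (g m)).sub h2
  have hcont : ContinuousOn (fun t => g1f t - L) (uIcc m a) := by
    intro t ht
    have ht0 : 0 < t := lt_of_lt_of_le hm2 (hsub ht)
    exact (((hasDerivAt_g1 hB ht0).continuousAt).sub continuousAt_const).continuousWithinAt
  have hii : IntervalIntegrable (fun t => g1f t - L) volume m a :=
    hcont.intervalIntegrable
  have key := intervalIntegral.integral_eq_sub_of_hasDerivAt hφderiv hii
  have hφm : g m - g m - L*(m-m) = 0 := by ring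
  rw [hφm, sub_zero] at key
  -- bound the interval integral
  rw [show (∫ x in B, p a x) - (∫ x in B, p m x) - (∫ x in B, p1 m x) * (a - m)
    = g a - g m - L*(a-m) from rfl, ← key]
  have hb2 : IntervalIntegrable (fun t => 12/m^2 * |t - m|) volume m a := by
    apply Continuous.intervalIntegrable
    exact continuous_const.mul (continuous_abs.comp (continuous_id.sub continuous_const))
  have hae : ∀ᵐ t ∂volume.restrict (Set.uIoc m a), ‖g1f t - L‖ ≤ 12/m^2 * |t - m| := by
    filter_upwards [ae_restrict_mem measurableSet_uIoc] with t ht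
    rw [Real.norm_eq_abs]
    exact hlip t (hsub (Set.Ioc_subset_Icc_self ht))
  have h3 := intervalIntegral.norm_integral_le_abs_of_norm_le hae hb2
  rw [Real.norm_eq_abs] at h3
  refine h3.trans ?_
  have h4 : (∫ t in m..a, 12/m^2 * |t - m|) = 12/m^2 * ((a-m)*|a-m|/2) := by
    rw [intervalIntegral.integral_const_mul]
    congr 1
    have hcs := intervalIntegral.integral_comp_sub_right (a := m) (b := a)
      (fun u => |u|) m
    rw [show m - m = (0:ℝ) by ring] at hcs
    rw [hcs, integral_abs_interval]
  rw [h4]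
  have h6 : |a - m| * |a - m| = (a - m)^2 := by
    rw [← abs_mul, abs_of_nonneg (mul_self_nonneg _)]
    ring
  rw [abs_mul, abs_of_nonneg (by positivity : (0:ℝ) ≤ 12/m^2), abs_div,
    abs_mul, abs_abs, h6]
  rw [abs_two]
  ring_nf
  nlinarith [sq_nonneg (a-m), sq_nonneg m, hm]

noncomputable def G (B : Set ℝ) (a : ℝ) : ℝ := ((gaussianReal 0 a.toNNReal) B).toReal

lemma G_eq {B : Set ℝ} (hB : MeasurableSet B) {a : ℝ} (ha : 0 < a) :
    G B a = ∫ x in B, p a x := by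
  have hv : a.toNNReal ≠ 0 := by rw [Ne, Real.toNNReal_eq_zero]; exact not_le.mpr ha
  rw [G, gaussianReal_apply_eq_integral 0 hv B,
    ENNReal.toReal_ofReal (setIntegral_nonneg hB fun x _ => gaussianPDFReal_nonneg 0 _ x)]
  simp_rw [p_eq_gaussianPDFReal ha]

lemma G_nonneg (B : Set ℝ) (a : ℝ) : 0 ≤ G B a := ENNReal.toReal_nonneg

lemma G_le_one (B : Set ℝ) (a : ℝ) : G B a ≤ 1 := by
  rw [G]
  have h := prob_le_one (μ := gaussianReal 0 a.toNNReal) (s := B)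
  exact ENNReal.toReal_le_of_le_ofReal zero_le_one (by simpa using h)

lemma key_bound {B : Set ℝ} (hB : MeasurableSet B) {m : ℝ} (hm : 0 < m)
    {a : ℝ} (ha : 0 ≤ a) :
    |G B a - G B m - (∫ x in B, p1 m x) * (a - m)| ≤ 8/m^2 * (a-m)^2 := by
  have hL : |∫ x in B, p1 m x| ≤ 1/m := setIntegral_abs_p1_le hm B
  rcases le_or_gt (m/2) a with hcase | hcase
  · have ha0 : 0 < a := lt_of_lt_of_le (by positivity) hcase
    rw [G_eq hB ha0, G_eq hB hm]
    refine (taylor_bound hB hm hcase).trans ?_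
    have h1 : (0:ℝ) ≤ (a-m)^2 := sq_nonneg _
    have h2 : (0:ℝ) < m^2 := by positivity
    rw [div_mul_eq_mul_div, div_mul_eq_mul_div, div_le_div_iff₀ h2 h2]
    nlinarith
  · have h1 : |G B a - G B m| ≤ 1 := by
      have hx1 := G_le_one B a
      have hx2 := G_nonneg B a
      have hx3 := G_le_one B m
      have hx4 := G_nonneg B m
      rcases abs_cases (G B a - G B m) with ⟨h,_⟩|⟨h,_⟩ <;> linarith
    have h2 : |(∫ x in B, p1 m x) * (a - m)| ≤ 1 := by
      rw [abs_mul]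
      have ham : |a - m| ≤ m := by
        rcases abs_cases (a - m) with ⟨h,_⟩|⟨h,_⟩ <;> linarith
      calc |∫ x in B, p1 m x| * |a - m| ≤ (1/m) * m :=
            mul_le_mul hL ham (abs_nonneg _) (by positivity)
        _ = 1 := by field_simp
    have h3 : |G B a - G B m - (∫ x in B, p1 m x) * (a - m)| ≤ 2 :=
      (abs_sub _ _).trans (by linarith)
    refine h3.trans ?_
    rw [div_mul_eq_mul_div, le_div_iff₀ (by positivity)]
    nlinarith

lemma measurable_gaussian_kernel {B : Set ℝ} (hB : MeasurableSet B) :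
    Measurable fun a : ℝ => gaussianReal 0 a.toNNReal B := by
  have heq : (fun a : ℝ => gaussianReal 0 a.toNNReal B)
      = fun a => if a ≤ 0 then (Measure.dirac 0 B)
          else ∫⁻ x in B, gaussianPDF 0 a.toNNReal x := by
    funext a
    by_cases ha : a ≤ 0
    · rw [if_pos ha, show a.toNNReal = 0 from Real.toNNReal_eq_zero.mpr ha,
        gaussianReal_zero_var]
    · rw [if_neg ha]
      have hv : a.toNNReal ≠ 0 := by
        rw [Ne, Real.toNNReal_eq_zero]; exact ha
      rw [gaussianReal_of_var_ne_zero 0 hv, withDensity_apply _ hB]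
  rw [heq]
  refine Measurable.ite measurableSet_Iic measurable_const ?_
  have hjoint : Measurable (Function.uncurry fun (a x : ℝ) => gaussianPDF 0 a.toNNReal x) := by
    apply Measurable.ennreal_ofReal
    unfold gaussianPDFReal
    fun_prop
  exact hjoint.lintegral_prod_right'

lemma measurable_G {B : Set ℝ} (hB : MeasurableSet B) : Measurable (G B) :=
  (measurable_gaussian_kernel hB).ennreal_toReal

end GaussMix

open GaussMix

/-- Total variation distance between two measures on `ℝ`:
the supremum over Borel sets `B` of `|μ B - ν B|`. -/
noncomputable def dTV (μ ν : Measure ℝ) : ℝ :=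
  ⨆ s : {s : Set ℝ // MeasurableSet s}, |(μ s.1).toReal - (ν s.1).toReal|

/-- **Total variation bound for Gaussian variance mixtures.**
If conditionally on the square-integrable `A ≥ 0` the variable `F` is centered Gaussian with
variance `A`, `σ² = E[A] > 0` and `Z ~ N(0, σ²)`, then `d_TV(F, Z) ≤ (8/σ⁴)·Var(A)`. -/
theorem dTV_gaussian_mixture_le
    {Ω : Type*} [MeasurableSpace Ω] (P : Measure Ω) [IsProbabilityMeasure P]
    (F A : Ω → ℝ) (hFmeas : Measurable F) (hAmeas : Measurable A)
    (hApos : ∀ ω, 0 ≤ A ω) (hA2 : MemLp A 2 P)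
    (hσpos : 0 < ∫ ω, A ω ∂P)
    (hcond : P.map (fun ω => (A ω, F ω)) =
      (P.map A).bind (fun a => (gaussianReal 0 (Real.toNNReal a)).map (fun x => (a, x)))) :
    dTV (P.map F) (gaussianReal 0 (Real.toNNReal (∫ ω, A ω ∂P))) ≤
      8 / (∫ ω, A ω ∂P) ^ 2 * variance A P := by
  set m : ℝ := ∫ ω, A ω ∂P with hm_def
  have hm : 0 < m := hσpos
  -- kernel
  set κ' : ℝ → Measure (ℝ × ℝ) :=
    fun a => (gaussianReal 0 (Real.toNNReal a)).map (fun x => (a, x)) with hκ'def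
  set κ : ProbabilityTheory.Kernel ℝ ℝ :=
    ⟨fun a => gaussianReal 0 a.toNNReal,
      Measure.measurable_measure.mpr fun s hs => measurable_gaussian_kernel hs⟩ with hκdef
  haveI : ProbabilityTheory.IsMarkovKernel κ := ⟨fun a => by
    show IsProbabilityMeasure (gaussianReal 0 a.toNNReal); infer_instance⟩
  have hκ' : Measurable κ' := by
    apply Measure.measurable_measure.mpr
    intro s hs
    have h0 : ∀ a, κ' a s = κ a (Prod.mk a ⁻¹' s) := fun a =>
      Measure.map_apply measurable_prodMk_left hs
    simp_rw [h0]
    exact ProbabilityTheory.Kernel.measurable_kernel_prodMk_left hs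
  -- integrability facts
  have hIntA : Integrable A P := hA2.integrable one_le_two
  have hsq : Integrable (fun ω => (A ω - m)^2) P := by
    have h := (hA2.sub (memLp_const m)).integrable_sq
    refine h.congr (Filter.Eventually.of_forall fun ω => ?_)
    simp
  have hvar : variance A P = ∫ ω, (A ω - m)^2 ∂P := by
    rw [variance_eq_integral hA2.aemeasurable]
  -- per-set bound
  have hbound : ∀ (B : Set ℝ), MeasurableSet B →
      |(P.map F B).toReal - (gaussianReal 0 m.toNNReal B).toReal|
        ≤ 8 / m^2 * variance A P := by
    intro B hB
    -- identify P.map F B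
    have hmapF : P.map F = ((P.map A).bind κ').map Prod.snd := by
      rw [← hcond, Measure.map_map measurable_snd (hAmeas.prodMk hFmeas)]
      rfl
    have hPF : P.map F B = ∫⁻ ω, gaussianReal 0 (A ω).toNNReal B ∂P := by
      rw [hmapF, Measure.map_apply measurable_snd hB,
        Measure.bind_apply (measurable_snd hB) hκ'.aemeasurable]
      have h0 : ∀ a, κ' a (Prod.snd ⁻¹' B) = gaussianReal 0 a.toNNReal B := by
        intro a
        rw [hκ'def]
        rw [Measure.map_apply measurable_prodMk_left (measurable_snd hB)]
        rfl
      simp_rw [h0]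
      rw [lintegral_map (measurable_gaussian_kernel hB) hAmeas]
    -- real version
    have hGA : (P.map F B).toReal = ∫ ω, G B (A ω) ∂P := by
      rw [hPF]
      have htr := integral_toReal (f := fun ω => gaussianReal 0 (A ω).toNNReal B) (μ := P)
        (by exact ((measurable_gaussian_kernel hB).comp hAmeas).aemeasurable)
        (Filter.Eventually.of_forall fun ω =>
          lt_of_le_of_lt prob_le_one ENNReal.one_lt_top)
      rw [← htr]
      rfl
    set L : ℝ := ∫ x in B, p1 m x with hLdef
    have hGint : Integrable (fun ω => G B (A ω)) P := by
      refine Integrable.mono' (integrable_const 1)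
        ((measurable_G hB).comp hAmeas).aestronglyMeasurable
        (Filter.Eventually.of_forall fun ω => ?_)
      rw [Real.norm_eq_abs, abs_of_nonneg (G_nonneg _ _)]
      exact G_le_one _ _
    have hdecomp : (P.map F B).toReal - (gaussianReal 0 m.toNNReal B).toReal
        = ∫ ω, (G B (A ω) - G B m - L * (A ω - m)) ∂P := by
      have e1 : Integrable (fun ω => G B (A ω) - G B m) P := hGint.sub (integrable_const _)
      have e2 : Integrable (fun ω => L * (A ω - m)) P :=
        (hIntA.sub (integrable_const m)).const_mul L
      rw [integral_sub e1 e2, integral_sub hGint (integrable_const _),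
        integral_const_mul, integral_sub hIntA (integrable_const m)]
      simp [hGA]
      rw [← hm_def, sub_self, mul_zero, sub_zero]; rfl
    rw [hdecomp]
    have habs : |∫ ω, (G B (A ω) - G B m - L * (A ω - m)) ∂P|
        ≤ ∫ ω, |G B (A ω) - G B m - L * (A ω - m)| ∂P := by
      simpa [Real.norm_eq_abs] using
        norm_integral_le_integral_norm (μ := P) (fun ω => G B (A ω) - G B m - L * (A ω - m))
    refine habs.trans ?_
    have hptw : ∀ ω, |G B (A ω) - G B m - L * (A ω - m)| ≤ 8/m^2 * (A ω - m)^2 :=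
      fun ω => key_bound hB hm (hApos ω)
    have hintabs : Integrable (fun ω => |G B (A ω) - G B m - L * (A ω - m)|) P :=
      ((hGint.sub (integrable_const _)).sub
        ((hIntA.sub (integrable_const m)).const_mul L)).abs
    calc ∫ ω, |G B (A ω) - G B m - L * (A ω - m)| ∂P
        ≤ ∫ ω, 8/m^2 * (A ω - m)^2 ∂P :=
          integral_mono hintabs (hsq.const_mul _) hptw
      _ = 8/m^2 * variance A P := by rw [integral_const_mul, hvar]
  -- conclude via csSup
  have hne : Nonempty {s : Set ℝ // MeasurableSet s} := ⟨⟨∅, MeasurableSet.empty⟩⟩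
  exact ciSup_le fun s => hbound s.1 s.2
end

section
/- Let S₁ and S₂ be positive self-adjoint trace-class operators on a separable Hilbert space. Then ‖√S₁ − √S₂‖_HS ≤ |Tr(S₁) − Tr(S₂)|^{1/2} + √2·‖S₁ − S₂‖_HS^{1/4}·min{Tr(√S₁), Tr(√S₂)}^{1/2}. -/
open MeasureTheory
open scoped RealInnerProductSpace

variable {H : Type*} [NormedAddCommGroup H] [InnerProductSpace ℝ H] [CompleteSpace H]

set_option linter.unusedSectionVars false

lemma ps_symm' {T : H →L[ℝ] H} (hT : IsSelfAdjoint T) (x y : H) : ⟪T x, y⟫ = ⟪x, T y⟫ :=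
  hT.isSymmetric x y

lemma ps_inner_nonneg {T : H →L[ℝ] H} (hT : T.IsPositive) (x : H) : 0 ≤ ⟪T x, x⟫ := by
  simpa using hT.inner_nonneg_left x

lemma ps_parseval (b : HilbertBasis ℕ ℝ H) (x : H) :
    HasSum (fun n => ⟪x, b n⟫ ^ 2) (‖x‖ ^ 2) := by
  have h := b.hasSum_inner_mul_inner x x
  rw [real_inner_self_eq_norm_sq] at h
  convert h using 2 with n
  · rfl
  rw [sq, real_inner_comm (b n) x]

lemma ps_norm_le_of_forall_inner {T : H →L[ℝ] H} (hT : IsSelfAdjoint T) {M : ℝ} (hM : 0 ≤ M)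
    (h : ∀ x : H, ‖x‖ ≤ 1 → |⟪T x, x⟫| ≤ M) : ‖T‖ ≤ M := by
  -- quadratic form bound for all vectors
  have hz : ∀ z : H, |⟪T z, z⟫| ≤ M * ‖z‖ ^ 2 := by
    intro z
    rcases eq_or_ne z 0 with rfl | hz0
    · simp
    · have hn : 0 < ‖z‖ := norm_pos_iff.mpr hz0
      have h1 : ‖(‖z‖⁻¹ • z)‖ ≤ 1 := by
        rw [norm_smul, norm_inv, norm_norm, inv_mul_cancel₀ hn.ne']
      have h2 := h _ h1
      rw [_root_.map_smul, inner_smul_left, inner_smul_right] at h2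
      simp only [RCLike.star_def, conj_trivial] at h2
      rw [abs_mul, abs_mul, abs_inv, abs_norm] at h2
      have : |⟪T z, z⟫| * (‖z‖⁻¹ * ‖z‖⁻¹) ≤ M := by
        calc |⟪T z, z⟫| * (‖z‖⁻¹ * ‖z‖⁻¹) = ‖z‖⁻¹ * (‖z‖⁻¹ * |⟪T z, z⟫|) := by ring
          _ ≤ M := h2
      have hinv : 0 < ‖z‖⁻¹ * ‖z‖⁻¹ := by positivity
      rw [← le_div_iff₀ hinv] at this
      calc |⟪T z, z⟫| ≤ M / (‖z‖⁻¹ * ‖z‖⁻¹) := this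
        _ = M * ‖z‖ ^ 2 := by rw [div_eq_mul_inv, mul_inv, inv_inv]; ring
  -- bilinear bound
  have hxy : ∀ x y : H, ⟪T x, y⟫ ≤ M * ‖x‖ * ‖y‖ := by
    have key : ∀ x y : H, ⟪T x, y⟫ ≤ M / 2 * (‖x‖ ^ 2 + ‖y‖ ^ 2) := by
      intro x y
      have e1 : ⟪T (x + y), x + y⟫ - ⟪T (x - y), x - y⟫ = 4 * ⟪T x, y⟫ := by
        have c1 : ⟪T y, x⟫ = ⟪T x, y⟫ := by
          rw [ps_symm' hT, real_inner_comm]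
        simp only [map_add, map_sub, inner_add_left, inner_add_right, inner_sub_left,
          inner_sub_right]
        linarith [c1]
      have b1 := (abs_le.mp (hz (x + y))).2
      have b2 := (abs_le.mp (hz (x - y))).1
      have par : ‖x + y‖ ^ 2 + ‖x - y‖ ^ 2 = 2 * (‖x‖ ^ 2 + ‖y‖ ^ 2) := by
        have := parallelogram_law_with_norm ℝ x y
        linarith [this]
      nlinarith [b1, b2, par, e1]
    intro x y
    rcases eq_or_ne x 0 with rfl | hx0
    · simp
    rcases eq_or_ne y 0 with rfl | hy0
    · simp
    have hnx : 0 < ‖x‖ := norm_pos_iff.mpr hx0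
    have hny : 0 < ‖y‖ := norm_pos_iff.mpr hy0
    have := key (‖x‖⁻¹ • x) (‖y‖⁻¹ • y)
    rw [_root_.map_smul, inner_smul_left, inner_smul_right] at this
    simp only [RCLike.star_def, conj_trivial, norm_smul, norm_inv, norm_norm] at this
    rw [inv_mul_cancel₀ hnx.ne', inv_mul_cancel₀ hny.ne'] at this
    have h2 : ‖x‖⁻¹ * (‖y‖⁻¹ * ⟪T x, y⟫) ≤ M := by
      calc ‖x‖⁻¹ * (‖y‖⁻¹ * ⟪T x, y⟫) ≤ M / 2 * (1 ^ 2 + 1 ^ 2) := this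
        _ = M := by ring
    have h3 : ⟪T x, y⟫ = ‖x‖ * ‖y‖ * (‖x‖⁻¹ * (‖y‖⁻¹ * ⟪T x, y⟫)) := by
      field_simp
    rw [h3]
    calc ‖x‖ * ‖y‖ * (‖x‖⁻¹ * (‖y‖⁻¹ * ⟪T x, y⟫)) ≤ ‖x‖ * ‖y‖ * M := by
          apply mul_le_mul_of_nonneg_left h2 (by positivity)
      _ = M * ‖x‖ * ‖y‖ := by ring
  refine T.opNorm_le_bound hM (fun x => ?_)
  rcases eq_or_ne (T x) 0 with h0 | h0
  · rw [h0]; simp; positivity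
  have hTx : 0 < ‖T x‖ := norm_pos_iff.mpr h0
  have := hxy x (T x)
  rw [real_inner_self_eq_norm_sq] at this
  nlinarith [this, hTx]

lemma ps_opNorm_le_hs (b : HilbertBasis ℕ ℝ H) {A : H →L[ℝ] H} (hA : IsSelfAdjoint A)
    (h : Summable fun n => ‖A (b n)‖ ^ 2) :
    ‖A‖ ≤ Real.sqrt (∑' n, ‖A (b n)‖ ^ 2) := by
  set S := ∑' n, ‖A (b n)‖ ^ 2 with hS
  have hS0 : 0 ≤ S := tsum_nonneg (fun n => sq_nonneg _)
  refine A.opNorm_le_bound (Real.sqrt_nonneg _) (fun x => ?_)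
  have hsq : ‖A x‖ ^ 2 ≤ S * ‖x‖ ^ 2 := by
    have hp := ps_parseval b (A x)
    have hle : ∀ n, ⟪A x, b n⟫ ^ 2 ≤ ‖x‖ ^ 2 * ‖A (b n)‖ ^ 2 := by
      intro n
      have h1 : |⟪A x, b n⟫| ≤ ‖x‖ * ‖A (b n)‖ := by
        rw [ps_symm' hA]
        exact abs_real_inner_le_norm _ _
      calc ⟪A x, b n⟫ ^ 2 = |⟪A x, b n⟫| ^ 2 := (sq_abs _).symm
        _ ≤ (‖x‖ * ‖A (b n)‖) ^ 2 := by
            apply sq_le_sq' _ h1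
            nlinarith [abs_nonneg (⟪A x, b n⟫ : ℝ)]
        _ = ‖x‖ ^ 2 * ‖A (b n)‖ ^ 2 := by ring
    calc ‖A x‖ ^ 2 = ∑' n, ⟪A x, b n⟫ ^ 2 := hp.tsum_eq.symm
      _ ≤ ∑' n, ‖x‖ ^ 2 * ‖A (b n)‖ ^ 2 := by
          exact Summable.tsum_le_tsum hle hp.summable (h.mul_left _)
      _ = ‖x‖ ^ 2 * S := by rw [tsum_mul_left]
      _ = S * ‖x‖ ^ 2 := by ring
  have h1 : ‖A x‖ = Real.sqrt (‖A x‖ ^ 2) := (Real.sqrt_sq (norm_nonneg _)).symm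
  rw [h1]
  calc Real.sqrt (‖A x‖ ^ 2) ≤ Real.sqrt (S * ‖x‖ ^ 2) := Real.sqrt_le_sqrt hsq
    _ = Real.sqrt S * ‖x‖ := by
        rw [Real.sqrt_mul hS0, Real.sqrt_sq (norm_nonneg _)]

set_option maxHeartbeats 1000000 in
set_option synthInstance.maxHeartbeats 400000 in
lemma ps_opnorm_sq_le {S₁ S₂ R₁ R₂ : H →L[ℝ] H}
    (hR₁ : R₁.IsPositive) (hR₂ : R₂.IsPositive)
    (hR₁sq : R₁ ∘L R₁ = S₁) (hR₂sq : R₂ ∘L R₂ = S₂) :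
    ‖R₁ - R₂‖ ^ 2 ≤ ‖S₁ - S₂‖ := by
  set T := R₁ - R₂ with hTdef
  have hTsa : IsSelfAdjoint T := hR₁.isSelfAdjoint.sub hR₂.isSelfAdjoint
  have hop : S₁ - S₂ = R₁ ∘L T + T ∘L R₂ := by
    rw [← hR₁sq, ← hR₂sq]
    ext x
    simp only [hTdef, ContinuousLinearMap.sub_apply, ContinuousLinearMap.comp_apply,
      ContinuousLinearMap.add_apply, map_sub]
    abel
  set V := ‖S₁ - S₂‖ with hVdef
  have hV0 : 0 ≤ V := norm_nonneg _
  set K := ‖R₁‖ + ‖R₂‖ with hKdef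
  have hK0 : 0 ≤ K := by positivity
  clear_value K
  refine le_of_forall_pos_le_add (fun η hη => ?_)
  by_cases hT0 : ‖T‖ = 0
  · rw [hT0]; nlinarith
  have hTpos : 0 < ‖T‖ := lt_of_le_of_ne (norm_nonneg _) (Ne.symm hT0)
  set u : ℝ := min (η / 2) ((η / (2 * K + 2)) ^ 2) with hudef
  have hu0 : 0 < u := by
    apply lt_min (by linarith)
    have : 0 < η / (2 * K + 2) := by positivity
    positivity
  have huη : K * Real.sqrt u + u ≤ η := by
    have h1 : u ≤ η / 2 := min_le_left _ _
    have h2 : Real.sqrt u ≤ η / (2 * K + 2) := by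
      calc Real.sqrt u ≤ Real.sqrt ((η / (2 * K + 2)) ^ 2) :=
            Real.sqrt_le_sqrt (min_le_right _ _)
        _ = η / (2 * K + 2) := Real.sqrt_sq (by positivity)
    have h3 : K * Real.sqrt u ≤ K * (η / (2 * K + 2)) :=
      mul_le_mul_of_nonneg_left h2 hK0
    have h5 : (0:ℝ) < 2 * K + 2 := by linarith
    have hweq : η / (2 * K + 2) * (2 * K + 2) = η := div_mul_cancel₀ η h5.ne'
    have hw0 : 0 ≤ η / (2 * K + 2) := by positivity
    have h4 : K * (η / (2 * K + 2)) ≤ η / 2 := by nlinarith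
    have h6 : K * Real.sqrt u ≤ η / 2 := le_trans h3 h4
    linarith only [h1, h6]
  by_cases hcase : ‖T‖ ^ 2 ≤ u
  · have := hu0
    have h1 : u ≤ η / 2 := min_le_left _ _
    linarith
  push_neg at hcase
  set M := Real.sqrt (‖T‖ ^ 2 - u) with hMdef
  have hM0 : 0 ≤ M := Real.sqrt_nonneg _
  have hMsq : M ^ 2 = ‖T‖ ^ 2 - u := Real.sq_sqrt (by linarith)
  have hMlt : M < ‖T‖ := by
    nlinarith [hMsq, hu0, hM0, hTpos]
  obtain ⟨x, hx1, hxM⟩ : ∃ x : H, ‖x‖ ≤ 1 ∧ M < |⟪T x, x⟫| := by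
    by_contra hcon
    push_neg at hcon
    exact absurd (ps_norm_le_of_forall_inner hTsa hM0 hcon) (not_le.mpr hMlt)
  set lam := (⟪T x, x⟫ : ℝ) with hlamdef
  have hlam2 : ‖T‖ ^ 2 - u < lam ^ 2 := by
    have : M ^ 2 < lam ^ 2 := by
      rw [← sq_abs lam]
      exact pow_lt_pow_left₀ hxM hM0 two_ne_zero
    linarith [hMsq]
  set d := T x - lam • x with hddef
  have hTxle : ‖T x‖ ≤ ‖T‖ := by
    calc ‖T x‖ ≤ ‖T‖ * ‖x‖ := T.le_opNorm x
      _ ≤ ‖T‖ * 1 := mul_le_mul_of_nonneg_left hx1 (norm_nonneg _)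
      _ = ‖T‖ := mul_one _
  have hd2 : ‖d‖ ^ 2 ≤ u := by
    have expand : ‖d‖ ^ 2 = ‖T x‖ ^ 2 - 2 * lam ^ 2 + lam ^ 2 * ‖x‖ ^ 2 := by
      rw [hddef, norm_sub_sq_real, inner_smul_right, ← hlamdef, norm_smul]
      rw [Real.norm_eq_abs, mul_pow, sq_abs]
      ring
    have hx2 : ‖x‖ ^ 2 ≤ 1 := by nlinarith [norm_nonneg x]
    have h1 : lam ^ 2 * ‖x‖ ^ 2 ≤ lam ^ 2 := by
      calc lam ^ 2 * ‖x‖ ^ 2 ≤ lam ^ 2 * 1 := mul_le_mul_of_nonneg_left hx2 (sq_nonneg lam)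
        _ = lam ^ 2 := mul_one _
    nlinarith [hTxle, norm_nonneg (T x), hlam2]
  have hdu : ‖d‖ ≤ Real.sqrt u := (Real.le_sqrt (norm_nonneg d) hu0.le).mpr hd2
  have hTx_eq : T x = lam • x + d := by rw [hddef]; abel
  have hR1 : (⟪R₁ (T x), x⟫ : ℝ) = lam * ⟪R₁ x, x⟫ + ⟪d, R₁ x⟫ := by
    rw [ps_symm' hR₁.isSelfAdjoint (T x) x, hTx_eq, inner_add_left, real_inner_smul_left,
      real_inner_comm x (R₁ x)]
  have hR2 : (⟪T (R₂ x), x⟫ : ℝ) = lam * ⟪R₂ x, x⟫ + ⟪R₂ x, d⟫ := by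
    rw [ps_symm' hTsa (R₂ x) x, hTx_eq, inner_add_right, real_inner_smul_right]
  have hdecomp : (⟪(S₁ - S₂) x, x⟫ : ℝ)
      = lam * (⟪R₁ x, x⟫ + ⟪R₂ x, x⟫) + (⟪d, R₁ x⟫ + ⟪R₂ x, d⟫) := by
    rw [hop]
    simp only [ContinuousLinearMap.add_apply, ContinuousLinearMap.comp_apply, inner_add_left]
    rw [hR1, hR2]; ring
  set s := (⟪R₁ x, x⟫ : ℝ) + ⟪R₂ x, x⟫ with hsdef
  have hp1 := ps_inner_nonneg hR₁ x
  have hp2 := ps_inner_nonneg hR₂ x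
  have hs0 : 0 ≤ s := add_nonneg hp1 hp2
  have hlam_eq : lam = (⟪R₁ x, x⟫ : ℝ) - ⟪R₂ x, x⟫ := by
    rw [hlamdef, hTdef]
    simp [ContinuousLinearMap.sub_apply, inner_sub_left]
  have habs_lam : |lam| ≤ s := by
    rw [abs_le]; constructor <;> (rw [hlam_eq, hsdef]; nlinarith)
  have hxx : ‖x‖ * ‖x‖ ≤ 1 := by nlinarith [norm_nonneg x]
  have hb1 : |(⟪(S₁ - S₂) x, x⟫ : ℝ)| ≤ V := by
    calc |(⟪(S₁ - S₂) x, x⟫ : ℝ)| ≤ ‖(S₁ - S₂) x‖ * ‖x‖ := abs_real_inner_le_norm _ _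
      _ ≤ (V * ‖x‖) * ‖x‖ := by
          apply mul_le_mul_of_nonneg_right ((S₁ - S₂).le_opNorm x) (norm_nonneg _)
      _ = V * (‖x‖ * ‖x‖) := by ring
      _ ≤ V * 1 := mul_le_mul_of_nonneg_left hxx hV0
      _ = V := mul_one _
  have hb2 : |(⟪d, R₁ x⟫ : ℝ)| ≤ Real.sqrt u * ‖R₁‖ := by
    calc |(⟪d, R₁ x⟫ : ℝ)| ≤ ‖d‖ * ‖R₁ x‖ := abs_real_inner_le_norm _ _
      _ ≤ Real.sqrt u * (‖R₁‖ * ‖x‖) := by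
          apply mul_le_mul hdu (R₁.le_opNorm x) (norm_nonneg _) (Real.sqrt_nonneg _)
      _ ≤ Real.sqrt u * ‖R₁‖ := by
          apply mul_le_mul_of_nonneg_left _ (Real.sqrt_nonneg u)
          calc ‖R₁‖ * ‖x‖ ≤ ‖R₁‖ * 1 := mul_le_mul_of_nonneg_left hx1 (norm_nonneg _)
            _ = ‖R₁‖ := mul_one _
  have hb3 : |(⟪R₂ x, d⟫ : ℝ)| ≤ Real.sqrt u * ‖R₂‖ := by
    calc |(⟪R₂ x, d⟫ : ℝ)| ≤ ‖R₂ x‖ * ‖d‖ := abs_real_inner_le_norm _ _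
      _ ≤ (‖R₂‖ * ‖x‖) * Real.sqrt u := by
          apply mul_le_mul (R₂.le_opNorm x) hdu (norm_nonneg _) (by positivity)
      _ = Real.sqrt u * (‖R₂‖ * ‖x‖) := by ring
      _ ≤ Real.sqrt u * ‖R₂‖ := by
          apply mul_le_mul_of_nonneg_left _ (Real.sqrt_nonneg u)
          calc ‖R₂‖ * ‖x‖ ≤ ‖R₂‖ * 1 := mul_le_mul_of_nonneg_left hx1 (norm_nonneg _)
            _ = ‖R₂‖ := mul_one _
  have hlams : lam * s = (⟪(S₁ - S₂) x, x⟫ : ℝ) - ((⟪d, R₁ x⟫ : ℝ) + ⟪R₂ x, d⟫) := by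
    rw [hdecomp]; ring
  have hlamsq : lam ^ 2 ≤ V + K * Real.sqrt u := by
    have h1 : lam ^ 2 ≤ |lam| * s := by nlinarith [abs_nonneg lam, neg_abs_le lam, le_abs_self lam]
    have h2 : |lam| * s = |lam * s| := by rw [abs_mul, abs_of_nonneg hs0]
    have h3 : |lam * s| ≤ V + K * Real.sqrt u := by
      rw [hlams]
      calc |(⟪(S₁ - S₂) x, x⟫ : ℝ) - ((⟪d, R₁ x⟫ : ℝ) + ⟪R₂ x, d⟫)|
          ≤ |(⟪(S₁ - S₂) x, x⟫ : ℝ)| + |(⟪d, R₁ x⟫ : ℝ) + ⟪R₂ x, d⟫| := abs_sub _ _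
        _ ≤ |(⟪(S₁ - S₂) x, x⟫ : ℝ)| + (|(⟪d, R₁ x⟫ : ℝ)| + |(⟪R₂ x, d⟫ : ℝ)|) := by
            linarith [abs_add_le (⟪d, R₁ x⟫ : ℝ) (⟪R₂ x, d⟫ : ℝ)]
        _ ≤ V + (Real.sqrt u * ‖R₁‖ + Real.sqrt u * ‖R₂‖) := by linarith
        _ = V + K * Real.sqrt u := by rw [hKdef]; ring
    linarith
  linarith [hlam2, hlamsq, huη]

lemma ps_abs_inner_le (T : H →L[ℝ] H) (x : H) : |⟪T x, x⟫| ≤ ‖T‖ * ‖x‖ ^ 2 := by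
  calc |⟪T x, x⟫| ≤ ‖T x‖ * ‖x‖ := abs_real_inner_le_norm _ _
    _ ≤ ‖T‖ * ‖x‖ * ‖x‖ := by
        have := T.le_opNorm x
        nlinarith [norm_nonneg x]
    _ = ‖T‖ * ‖x‖ ^ 2 := by ring

set_option maxHeartbeats 1000000 in
lemma ps_trace_pairing_bound (b : HilbertBasis ℕ ℝ H) {T R : H →L[ℝ] H}
    (hR : R.IsPositive)
    (hThs : Summable fun n => ‖T (b n)‖ ^ 2) (hRhs : Summable fun n => ‖R (b n)‖ ^ 2)
    (htrR : Summable fun n => ⟪R (b n), b n⟫) :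
    |∑' n, ⟪T (b n), R (b n)⟫| ≤ ‖T‖ * ∑' n, ⟪R (b n), b n⟫ := by
  classical
  set F : ℕ × ℕ → ℝ := fun p => ⟪T (b p.1), b p.2⟫ * ⟪R (b p.1), b p.2⟫ with hFdef
  have hTsq : Summable (fun p : ℕ × ℕ => (⟪T (b p.1), b p.2⟫ : ℝ) ^ 2) := by
    rw [summable_prod_of_nonneg (fun p => sq_nonneg _)]
    refine ⟨fun n => (ps_parseval b (T (b n))).summable, ?_⟩
    exact hThs.congr (fun n => ((ps_parseval b (T (b n))).tsum_eq).symm)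
  have hRsq : Summable (fun p : ℕ × ℕ => (⟪R (b p.1), b p.2⟫ : ℝ) ^ 2) := by
    rw [summable_prod_of_nonneg (fun p => sq_nonneg _)]
    refine ⟨fun n => (ps_parseval b (R (b n))).summable, ?_⟩
    exact hRhs.congr (fun n => ((ps_parseval b (R (b n))).tsum_eq).symm)
  have hFsum : Summable F := by
    have habs : Summable fun p => |F p| := by
      refine Summable.of_nonneg_of_le (fun p => abs_nonneg _) (fun p => ?_)
        (((hTsq.add hRsq).div_const 2))
      rw [hFdef]
      simp only [Pi.add_apply]
      rw [abs_mul]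
      nlinarith [sq_nonneg (|(⟪T (b p.1), b p.2⟫ : ℝ)| - |(⟪R (b p.1), b p.2⟫ : ℝ)|),
        sq_abs (⟪T (b p.1), b p.2⟫ : ℝ), sq_abs (⟪R (b p.1), b p.2⟫ : ℝ),
        abs_nonneg (⟪T (b p.1), b p.2⟫ : ℝ), abs_nonneg (⟪R (b p.1), b p.2⟫ : ℝ)]
    exact habs.of_abs
  have hrow : ∀ n, HasSum (fun m => F (n, m)) ((⟪T (b n), R (b n)⟫ : ℝ)) := by
    intro n
    have h := b.hasSum_inner_mul_inner (T (b n)) (R (b n))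
    convert h using 2 with m
    · rfl
    rw [hFdef]
    simp only
    rw [real_inner_comm (R (b n)) (b m)]
  set L := (∑' n, (⟪T (b n), R (b n)⟫ : ℝ)) with hLdef
  have hFL : HasSum F L := by
    have heq : ∑' p, F p = L := by
      rw [Summable.tsum_prod' hFsum (fun n => (hrow n).summable)]
      exact tsum_congr (fun n => (hrow n).tsum_eq)
    exact heq ▸ hFsum.hasSum
  have hmono : Monotone (fun k : ℕ => Finset.range k ×ˢ Finset.range k) := by
    intro i j hij
    exact Finset.product_subset_product (Finset.range_subset_range.2 hij) (Finset.range_subset_range.2 hij)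
  have hcof : ∀ p : ℕ × ℕ, ∃ k, p ∈ Finset.range k ×ˢ Finset.range k := by
    intro p
    refine ⟨max p.1 p.2 + 1, ?_⟩
    rw [Finset.mem_product, Finset.mem_range, Finset.mem_range]
    have h1 := le_max_left p.1 p.2
    have h2 := le_max_right p.1 p.2
    omega
  have htend : Filter.Tendsto (fun k => ∑ p ∈ Finset.range k ×ˢ Finset.range k, F p)
      Filter.atTop (nhds L) :=
    hFL.comp (Filter.tendsto_atTop_finset_of_monotone hmono hcof)
  have htrR0 : ∀ n, 0 ≤ (⟪R (b n), b n⟫ : ℝ) := fun n => ps_inner_nonneg hR (b n)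
  have hcorner : ∀ k : ℕ, |∑ p ∈ Finset.range k ×ˢ Finset.range k, F p|
      ≤ ‖T‖ * ∑' n, (⟪R (b n), b n⟫ : ℝ) := by
    intro k
    set B : Matrix (Fin k) (Fin k) ℝ := Matrix.of fun i j => ⟪R (b i), b j⟫ with hBdef
    have hBapp : ∀ i j, B i j = (⟪R (b (i : ℕ)), b (j : ℕ)⟫ : ℝ) := fun i j => rfl
    have hBpsd : B.PosSemidef := by
      rw [Matrix.posSemidef_iff_dotProduct_mulVec]
      constructor
      · ext i j
        rw [Matrix.conjTranspose_apply, hBapp, hBapp, star_trivial,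
          ps_symm' hR.isSelfAdjoint, real_inner_comm]
      · intro v
        have hsv : star v = v := by funext i; simp
        set y : H := ∑ i : Fin k, v i • b (i : ℕ) with hydef
        have hRy : R y = ∑ i : Fin k, v i • R (b (i : ℕ)) := by
          rw [hydef, map_sum]; simp_rw [_root_.map_smul]
        have hinner : (⟪R y, y⟫ : ℝ)
            = ∑ i : Fin k, v i * ∑ j : Fin k, v j * (⟪R (b (i : ℕ)), b (j : ℕ)⟫ : ℝ) := by
          rw [hRy, sum_inner]
          refine Finset.sum_congr rfl fun i _ => ?_
          rw [real_inner_smul_left, hydef, inner_sum]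
          congr 1
          refine Finset.sum_congr rfl fun j _ => ?_
          rw [real_inner_smul_right]
        have hdot : dotProduct (star v) (B.mulVec v) = (⟪R y, y⟫ : ℝ) := by
          rw [hsv, hinner]
          simp only [dotProduct, Matrix.mulVec]
          refine Finset.sum_congr rfl fun i _ => ?_
          rw [Finset.mul_sum, Finset.mul_sum]
          refine Finset.sum_congr rfl fun j _ => ?_
          rw [hBapp]
          ring
        rw [hdot]
        exact ps_inner_nonneg hR y
    obtain ⟨C, hC⟩ : ∃ C : Matrix (Fin k) (Fin k) ℝ, B = C.conjTranspose * C := by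
      open scoped MatrixOrder Matrix.Norms.L2Operator in
      exact CStarAlgebra.nonneg_iff_eq_star_mul_self.mp hBpsd.nonneg
    have hBij : ∀ i j, B i j = ∑ l : Fin k, C l i * C l j := by
      intro i j
      rw [hC]
      simp [Matrix.mul_apply, Matrix.conjTranspose_apply]
    set x : Fin k → H := fun l => ∑ i : Fin k, C l i • b (i : ℕ) with hxdef
    have hxl : ∀ l, (⟪T (x l), x l⟫ : ℝ)
        = ∑ i : Fin k, ∑ j : Fin k, C l i * C l j * (⟪T (b (i : ℕ)), b (j : ℕ)⟫ : ℝ) := by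
      intro l
      rw [hxdef]
      simp only
      rw [map_sum, sum_inner]
      refine Finset.sum_congr rfl fun i _ => ?_
      rw [_root_.map_smul, real_inner_smul_left, inner_sum, Finset.mul_sum]
      refine Finset.sum_congr rfl fun j _ => ?_
      rw [real_inner_smul_right]
      ring
    have hxnorm : ∀ l, ‖x l‖ ^ 2 = ∑ i : Fin k, (C l i) ^ 2 := by
      intro l
      have hon : Orthonormal ℝ ((⇑b) ∘ (Fin.val : Fin k → ℕ)) :=
        b.orthonormal.comp _ Fin.val_injective
      have h := hon.inner_sum (fun i => C l i) (fun i => C l i) Finset.univ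
      rw [← real_inner_self_eq_norm_sq, hxdef]
      simp only [Function.comp] at h
      rw [h]
      exact Finset.sum_congr rfl fun i _ => by
        simp [conj_trivial, sq]
    have hcorner_eq : ∑ p ∈ Finset.range k ×ˢ Finset.range k, F p
        = ∑ l : Fin k, (⟪T (x l), x l⟫ : ℝ) := by
      rw [Finset.sum_product]
      rw [← Fin.sum_univ_eq_sum_range (fun n => ∑ m ∈ Finset.range k, F (n, m)) k]
      have step1 : ∀ i : Fin k, ∑ m ∈ Finset.range k, F ((i : ℕ), m)
          = ∑ j : Fin k, F ((i : ℕ), (j : ℕ)) :=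
        fun i => (Fin.sum_univ_eq_sum_range (fun m => F ((i : ℕ), m)) k).symm
      calc ∑ i : Fin k, ∑ m ∈ Finset.range k, F ((i : ℕ), m)
          = ∑ i : Fin k, ∑ j : Fin k, F ((i : ℕ), (j : ℕ)) :=
            Finset.sum_congr rfl fun i _ => step1 i
        _ = ∑ i : Fin k, ∑ j : Fin k, ∑ l : Fin k,
              (⟪T (b (i : ℕ)), b (j : ℕ)⟫ : ℝ) * (C l i * C l j) := by
            refine Finset.sum_congr rfl fun i _ => Finset.sum_congr rfl fun j _ => ?_
            rw [hFdef]
            simp only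
            rw [← hBapp, hBij, Finset.mul_sum]
        _ = ∑ l : Fin k, ∑ i : Fin k, ∑ j : Fin k,
              (⟪T (b (i : ℕ)), b (j : ℕ)⟫ : ℝ) * (C l i * C l j) := by
            calc ∑ i : Fin k, ∑ j : Fin k, ∑ l : Fin k,
                  (⟪T (b (i : ℕ)), b (j : ℕ)⟫ : ℝ) * (C l i * C l j)
                = ∑ i : Fin k, ∑ l : Fin k, ∑ j : Fin k,
                  (⟪T (b (i : ℕ)), b (j : ℕ)⟫ : ℝ) * (C l i * C l j) :=
                  Finset.sum_congr rfl fun i _ => Finset.sum_comm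
              _ = ∑ l : Fin k, ∑ i : Fin k, ∑ j : Fin k,
                  (⟪T (b (i : ℕ)), b (j : ℕ)⟫ : ℝ) * (C l i * C l j) := Finset.sum_comm
        _ = ∑ l : Fin k, (⟪T (x l), x l⟫ : ℝ) := by
            refine Finset.sum_congr rfl fun l _ => ?_
            rw [hxl l]
            refine Finset.sum_congr rfl fun i _ => Finset.sum_congr rfl fun j _ => by ring
    rw [hcorner_eq]
    calc |∑ l : Fin k, (⟪T (x l), x l⟫ : ℝ)|
        ≤ ∑ l : Fin k, |(⟪T (x l), x l⟫ : ℝ)| := Finset.abs_sum_le_sum_abs _ _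
      _ ≤ ∑ l : Fin k, ‖T‖ * ‖x l‖ ^ 2 :=
          Finset.sum_le_sum fun l _ => ps_abs_inner_le T (x l)
      _ = ‖T‖ * ∑ l : Fin k, ∑ i : Fin k, (C l i) ^ 2 := by
          rw [Finset.mul_sum]
          exact Finset.sum_congr rfl fun l _ => by rw [hxnorm l]
      _ = ‖T‖ * ∑ i : Fin k, B i i := by
          congr 1
          have h1 : ∑ l : Fin k, ∑ i : Fin k, (C l i) ^ 2
              = ∑ i : Fin k, ∑ l : Fin k, (C l i) ^ 2 := Finset.sum_comm
          rw [h1]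
          refine Finset.sum_congr rfl fun i _ => ?_
          rw [hBij i i]
          exact Finset.sum_congr rfl fun l _ => by ring
      _ = ‖T‖ * ∑ n ∈ Finset.range k, (⟪R (b n), b n⟫ : ℝ) := by
          congr 1
          exact Fin.sum_univ_eq_sum_range (fun n => (⟪R (b n), b n⟫ : ℝ)) k
      _ ≤ ‖T‖ * ∑' n, (⟪R (b n), b n⟫ : ℝ) := by
          apply mul_le_mul_of_nonneg_left _ (norm_nonneg _)
          exact Summable.sum_le_tsum _ (fun n _ => htrR0 n) htrR
  have habs_tend : Filter.Tendsto (fun k => |∑ p ∈ Finset.range k ×ˢ Finset.range k, F p|)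
      Filter.atTop (nhds |L|) := htend.abs
  exact le_of_tendsto habs_tend (Filter.Eventually.of_forall hcorner)

lemma ps_sqrt_add_le (x y : ℝ) (hx : 0 ≤ x) (hy : 0 ≤ y) :
    Real.sqrt (x + y) ≤ Real.sqrt x + Real.sqrt y := by
  have h : x + y ≤ (Real.sqrt x + Real.sqrt y) ^ 2 := by
    nlinarith [Real.sq_sqrt hx, Real.sq_sqrt hy, Real.sqrt_nonneg x, Real.sqrt_nonneg y]
  calc Real.sqrt (x + y) ≤ Real.sqrt ((Real.sqrt x + Real.sqrt y) ^ 2) := Real.sqrt_le_sqrt h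
    _ = Real.sqrt x + Real.sqrt y := Real.sqrt_sq (by positivity)

/-- Trace of an operator computed in the Hilbert basis `b`. -/
noncomputable def opTrace (b : HilbertBasis ℕ ℝ H) (T : H →L[ℝ] H) : ℝ :=
  ∑' n, ⟪T (b n), b n⟫

/-- Hilbert–Schmidt norm of an operator computed in the Hilbert basis `b`. -/
noncomputable def opHSNorm (b : HilbertBasis ℕ ℝ H) (T : H →L[ℝ] H) : ℝ :=
  Real.sqrt (∑' n, ‖T (b n)‖ ^ 2)

set_option maxHeartbeats 1000000 in
set_option synthInstance.maxHeartbeats 1000000 in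
/-- **Modified Powers–Størmer inequality.**
For positive self-adjoint trace-class operators `S₁, S₂` on a separable Hilbert space with
positive square roots `R₁, R₂` (`Rᵢ² = Sᵢ`, so `Rᵢ = √Sᵢ`):
`‖√S₁ − √S₂‖_HS ≤ |Tr S₁ − Tr S₂|^{1/2} + √2 ‖S₁ − S₂‖_HS^{1/4} min{Tr √S₁, Tr √S₂}^{1/2}`. -/
theorem powers_stormer_modified (b : HilbertBasis ℕ ℝ H)
    (S₁ S₂ R₁ R₂ : H →L[ℝ] H)
    (hS₁ : S₁.IsPositive) (hS₂ : S₂.IsPositive)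
    (hR₁ : R₁.IsPositive) (hR₂ : R₂.IsPositive)
    (hR₁sq : R₁ ∘L R₁ = S₁) (hR₂sq : R₂ ∘L R₂ = S₂)
    (htrS₁ : Summable fun n => ⟪S₁ (b n), b n⟫)
    (htrS₂ : Summable fun n => ⟪S₂ (b n), b n⟫)
    (htrR₁ : Summable fun n => ⟪R₁ (b n), b n⟫)
    (htrR₂ : Summable fun n => ⟪R₂ (b n), b n⟫)
    (hHS : Summable fun n => ‖(S₁ - S₂) (b n)‖ ^ 2)
    (hHSR : Summable fun n => ‖(R₁ - R₂) (b n)‖ ^ 2) :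
    opHSNorm b (R₁ - R₂) ≤
      Real.sqrt |opTrace b S₁ - opTrace b S₂| +
        Real.sqrt 2 * opHSNorm b (S₁ - S₂) ^ ((1 : ℝ) / 4) *
          Real.sqrt (min (opTrace b R₁) (opTrace b R₂)) := by
  have hDsa : IsSelfAdjoint (R₁ - R₂) := hR₁.isSelfAdjoint.sub hR₂.isSelfAdjoint
  have hSsa : IsSelfAdjoint (S₁ - S₂) := hS₁.isSelfAdjoint.sub hS₂.isSelfAdjoint
  have hsub : ∀ n, (R₁ - R₂) (b n) = R₁ (b n) - R₂ (b n) := fun n => rfl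
  have hR1n : ∀ n, ‖R₁ (b n)‖ ^ 2 = ⟪S₁ (b n), b n⟫ := by
    intro n
    rw [← hR₁sq, ContinuousLinearMap.comp_apply, ps_symm' hR₁.isSelfAdjoint, real_inner_self_eq_norm_sq]
  have hR2n : ∀ n, ‖R₂ (b n)‖ ^ 2 = ⟪S₂ (b n), b n⟫ := by
    intro n
    rw [← hR₂sq, ContinuousLinearMap.comp_apply, ps_symm' hR₂.isSelfAdjoint, real_inner_self_eq_norm_sq]
  have hRhs₁ : Summable fun n => ‖R₁ (b n)‖ ^ 2 := htrS₁.congr fun n => (hR1n n).symm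
  have hRhs₂ : Summable fun n => ‖R₂ (b n)‖ ^ 2 := htrS₂.congr fun n => (hR2n n).symm
  -- the three coefficient sequences
  have ht_eq : ∀ n, (⟪(S₁ - S₂) (b n), b n⟫ : ℝ) = ⟪S₁ (b n), b n⟫ - ⟪S₂ (b n), b n⟫ := by
    intro n
    rw [ContinuousLinearMap.sub_apply, inner_sub_left]
  have hts : Summable fun n => (⟪(S₁ - S₂) (b n), b n⟫ : ℝ) :=
    (htrS₁.sub htrS₂).congr fun n => (ht_eq n).symm
  have e1 : ∀ n, ‖(R₁ - R₂) (b n)‖ ^ 2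
      = (⟪(R₁ - R₂) (b n), R₁ (b n)⟫ : ℝ) - ⟪(R₁ - R₂) (b n), R₂ (b n)⟫ := by
    intro n
    have hrfl : (⟪(R₁ - R₂) (b n), (R₁ - R₂) (b n)⟫ : ℝ)
        = ⟪(R₁ - R₂) (b n), R₁ (b n) - R₂ (b n)⟫ := rfl
    rw [← real_inner_self_eq_norm_sq, hrfl, inner_sub_right]
  have e2 : ∀ n, (⟪(S₁ - S₂) (b n), b n⟫ : ℝ)
      = (⟪(R₁ - R₂) (b n), R₁ (b n)⟫ : ℝ) + ⟪(R₁ - R₂) (b n), R₂ (b n)⟫ := by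
    intro n
    rw [ht_eq n, ← hR1n n, ← hR2n n, hsub n, inner_sub_left, inner_sub_left,
      ← real_inner_self_eq_norm_sq, ← real_inner_self_eq_norm_sq,
      real_inner_comm (R₂ (b n)) (R₁ (b n))]
    ring
  have hcs : Summable fun n => (⟪(R₁ - R₂) (b n), R₂ (b n)⟫ : ℝ) :=
    ((hts.sub hHSR).div_const 2).congr fun n => by
      have h1 := e1 n; have h2 := e2 n; linarith
  have has : Summable fun n => (⟪(R₁ - R₂) (b n), R₁ (b n)⟫ : ℝ) :=
    ((hts.add hHSR).div_const 2).congr fun n => by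
      have h1 := e1 n; have h2 := e2 n; linarith
  have htsum : (∑' n, (⟪(S₁ - S₂) (b n), b n⟫ : ℝ)) = opTrace b S₁ - opTrace b S₂ := by
    rw [show opTrace b S₁ - opTrace b S₂
        = (∑' n, (⟪S₁ (b n), b n⟫ : ℝ)) - ∑' n, (⟪S₂ (b n), b n⟫ : ℝ) from rfl,
      ← Summable.tsum_sub htrS₁ htrS₂]
    exact tsum_congr ht_eq
  -- two identities for the HS norm squared
  have hid1 : (∑' n, ‖(R₁ - R₂) (b n)‖ ^ 2)
      = (opTrace b S₁ - opTrace b S₂) - 2 * ∑' n, (⟪(R₁ - R₂) (b n), R₂ (b n)⟫ : ℝ) := by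
    calc (∑' n, ‖(R₁ - R₂) (b n)‖ ^ 2)
        = ∑' n, ((⟪(S₁ - S₂) (b n), b n⟫ : ℝ) - 2 * ⟪(R₁ - R₂) (b n), R₂ (b n)⟫) :=
          tsum_congr fun n => by have h1 := e1 n; have h2 := e2 n; linarith
      _ = (∑' n, (⟪(S₁ - S₂) (b n), b n⟫ : ℝ))
            - ∑' n, 2 * (⟪(R₁ - R₂) (b n), R₂ (b n)⟫ : ℝ) := Summable.tsum_sub hts (hcs.mul_left 2)
      _ = (opTrace b S₁ - opTrace b S₂)
            - 2 * ∑' n, (⟪(R₁ - R₂) (b n), R₂ (b n)⟫ : ℝ) := by rw [tsum_mul_left, htsum]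
  have hid2 : (∑' n, ‖(R₁ - R₂) (b n)‖ ^ 2)
      = 2 * (∑' n, (⟪(R₁ - R₂) (b n), R₁ (b n)⟫ : ℝ)) - (opTrace b S₁ - opTrace b S₂) := by
    calc (∑' n, ‖(R₁ - R₂) (b n)‖ ^ 2)
        = ∑' n, (2 * (⟪(R₁ - R₂) (b n), R₁ (b n)⟫ : ℝ) - ⟪(S₁ - S₂) (b n), b n⟫) :=
          tsum_congr fun n => by have h1 := e1 n; have h2 := e2 n; linarith
      _ = (∑' n, 2 * (⟪(R₁ - R₂) (b n), R₁ (b n)⟫ : ℝ))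
            - ∑' n, (⟪(S₁ - S₂) (b n), b n⟫ : ℝ) := Summable.tsum_sub (has.mul_left 2) hts
      _ = 2 * (∑' n, (⟪(R₁ - R₂) (b n), R₁ (b n)⟫ : ℝ))
            - (opTrace b S₁ - opTrace b S₂) := by rw [tsum_mul_left, htsum]
  -- pairing bounds
  have hc_bound : |∑' n, (⟪(R₁ - R₂) (b n), R₂ (b n)⟫ : ℝ)| ≤ ‖R₁ - R₂‖ * opTrace b R₂ :=
    ps_trace_pairing_bound b hR₂ hHSR hRhs₂ htrR₂
  have ha_bound : |∑' n, (⟪(R₁ - R₂) (b n), R₁ (b n)⟫ : ℝ)| ≤ ‖R₁ - R₂‖ * opTrace b R₁ :=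
    ps_trace_pairing_bound b hR₁ hHSR hRhs₁ htrR₁
  -- operator norm bound
  have hV0 : 0 ≤ opHSNorm b (S₁ - S₂) := Real.sqrt_nonneg _
  have hDle : ‖R₁ - R₂‖ ^ 2 ≤ opHSNorm b (S₁ - S₂) :=
    le_trans (ps_opnorm_sq_le hR₁ hR₂ hR₁sq hR₂sq) (ps_opNorm_le_hs b hSsa hHS)
  have hDV : ‖R₁ - R₂‖ ≤ Real.sqrt (opHSNorm b (S₁ - S₂)) := by
    rw [← Real.sqrt_sq (norm_nonneg (R₁ - R₂))]
    exact Real.sqrt_le_sqrt hDle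
  have htrR₁0 : 0 ≤ opTrace b R₁ := tsum_nonneg fun n => ps_inner_nonneg hR₁ (b n)
  have htrR₂0 : 0 ≤ opTrace b R₂ := tsum_nonneg fun n => ps_inner_nonneg hR₂ (b n)
  have hm0 : 0 ≤ min (opTrace b R₁) (opTrace b R₂) := le_min htrR₁0 htrR₂0
  have hA0 : 0 ≤ |opTrace b S₁ - opTrace b S₂| := abs_nonneg _
  -- key quadratic bound
  have hkey : (∑' n, ‖(R₁ - R₂) (b n)‖ ^ 2)
      ≤ |opTrace b S₁ - opTrace b S₂|
        + 2 * Real.sqrt (opHSNorm b (S₁ - S₂)) * min (opTrace b R₁) (opTrace b R₂) := by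
    rcases le_total (opTrace b R₁) (opTrace b R₂) with hmin | hmin
    · rw [min_eq_left hmin]
      have h1 : ‖R₁ - R₂‖ * opTrace b R₁
          ≤ Real.sqrt (opHSNorm b (S₁ - S₂)) * opTrace b R₁ :=
        mul_le_mul_of_nonneg_right hDV htrR₁0
      have h2 := le_abs_self (∑' n, (⟪(R₁ - R₂) (b n), R₁ (b n)⟫ : ℝ))
      have h3 := neg_abs_le (opTrace b S₁ - opTrace b S₂)
      have h4 := le_abs_self (opTrace b S₁ - opTrace b S₂)
      linarith [hid2, ha_bound]
    · rw [min_eq_right hmin]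
      have h1 : ‖R₁ - R₂‖ * opTrace b R₂
          ≤ Real.sqrt (opHSNorm b (S₁ - S₂)) * opTrace b R₂ :=
        mul_le_mul_of_nonneg_right hDV htrR₂0
      have h2 := neg_abs_le (∑' n, (⟪(R₁ - R₂) (b n), R₂ (b n)⟫ : ℝ))
      have h3 := le_abs_self (opTrace b S₁ - opTrace b S₂)
      linarith [hid1, hc_bound]
  -- final numeric assembly
  have hfinal : opHSNorm b (R₁ - R₂)
      ≤ Real.sqrt |opTrace b S₁ - opTrace b S₂|
        + Real.sqrt (2 * Real.sqrt (opHSNorm b (S₁ - S₂)) * min (opTrace b R₁) (opTrace b R₂)) := by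
    have h1 : opHSNorm b (R₁ - R₂)
        ≤ Real.sqrt (|opTrace b S₁ - opTrace b S₂|
          + 2 * Real.sqrt (opHSNorm b (S₁ - S₂)) * min (opTrace b R₁) (opTrace b R₂)) :=
      Real.sqrt_le_sqrt hkey
    have h2 := ps_sqrt_add_le |opTrace b S₁ - opTrace b S₂|
      (2 * Real.sqrt (opHSNorm b (S₁ - S₂)) * min (opTrace b R₁) (opTrace b R₂))
      hA0 (by positivity)
    linarith
  have hsplit : Real.sqrt (2 * Real.sqrt (opHSNorm b (S₁ - S₂)) * min (opTrace b R₁) (opTrace b R₂))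
      = Real.sqrt 2 * opHSNorm b (S₁ - S₂) ^ ((1 : ℝ) / 4)
        * Real.sqrt (min (opTrace b R₁) (opTrace b R₂)) := by
    rw [Real.sqrt_mul (by positivity) (min (opTrace b R₁) (opTrace b R₂)),
      Real.sqrt_mul (by norm_num : (0:ℝ) ≤ 2) (Real.sqrt (opHSNorm b (S₁ - S₂)))]
    congr 1
    rw [Real.sqrt_eq_rpow, Real.sqrt_eq_rpow, Real.sqrt_eq_rpow, ← Real.rpow_mul hV0]
    norm_num
  rw [hsplit] at hfinal
  exact hfinal
end
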